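/- arXiv:2603.08239 — 9 statements merged into one kernel-verified Lean document; each statement's English description precedes it below -/
import Mathlib

section
/- Assume M(s) > 0 for every s ∈ S. If Δ* ∈ C maximizes j over C (i.e., j(Δ') ≤ j(Δ*) for every Δ' ∈ C), then for every s ∈ S: D̂(s,Δ*) = t* and Σ_{a∈X_s} n_{s,a} Δ*_{s,a} Â_{s,a} = t*·M(s). Consequently max_{s∈S} D̂(s,Δ*) = t* and j(Δ*) = t*·M/(1−γ) − (4γ‖Â‖∞/(1−γ)²)·(t*)². -/
/-- any maximizer Δ* of the reduced sample-based TV-TRPO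
objective j over the zero-sum set C equalizes the per-state TV divergence at
t*, attains value t*·M(s) per state, and j(Δ*) takes the closed form. -/
theorem stmt_4 {S : Type} [Fintype S] [Nonempty S]
    (X : S → Type) [∀ s, Fintype (X s)]
    (hX : ∀ s, 2 ≤ Fintype.card (X s))
    (n : ∀ s, X s → ℕ) (hn : ∀ s a, 1 ≤ n s a)
    (A : ∀ s, X s → ℝ)
    (Anorm : ℝ) (hA : IsGreatest {x : ℝ | ∃ s, ∃ a : X s, x = |A s a|} Anorm)
    (hApos : 0 < Anorm)
    (Γ : S → ℝ) (hΓ : ∀ s, 0 < Γ s)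
    (γ : ℝ) (hγ0 : 0 < γ) (hγ1 : γ < 1)
    (M : S → ℝ)
    (hM : ∀ s, IsGreatest {y : ℝ | ∃ Δ : X s → ℝ,
        (1 / (∑ a, (n s a : ℝ))) * (∑ a, (n s a : ℝ) * |Δ a|) = 1 ∧
        (∑ a, (n s a : ℝ) * Δ a) = 0 ∧
        y = ∑ a, (n s a : ℝ) * Δ a * A s a} (M s))
    (hMpos : ∀ s, 0 < M s) :
    let Ts : S → ℝ := fun s => ∑ a, (n s a : ℝ)
    let Γtot : ℝ := ∑ s, Γ s
    let Mtot : ℝ := (1 / Γtot) * ∑ s, (Γ s / Ts s) * M s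
    let tstar : ℝ := (1 - γ) * Mtot / (8 * γ * Anorm)
    let Dhat : S → (∀ s', X s' → ℝ) → ℝ :=
      fun s Δ => (1 / Ts s) * ∑ a, (n s a : ℝ) * |Δ s a|
    let C : Set (∀ s, X s → ℝ) := {Δ | ∀ s, ∑ a, (n s a : ℝ) * Δ s a = 0}
    let j : (∀ s, X s → ℝ) → ℝ := fun Δ =>
      (1 / ((1 - γ) * Γtot)) * ∑ s, (Γ s / Ts s) * ∑ a, (n s a : ℝ) * Δ s a * A s a
      - (4 * γ * Anorm / (1 - γ) ^ 2) *
          (Finset.univ.sup' Finset.univ_nonempty (fun s => Dhat s Δ)) ^ 2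
    ∀ Δstar ∈ C, (∀ Δ' ∈ C, j Δ' ≤ j Δstar) →
      (∀ s, Dhat s Δstar = tstar ∧
        (∑ a, (n s a : ℝ) * Δstar s a * A s a) = tstar * M s) ∧
      Finset.univ.sup' Finset.univ_nonempty (fun s => Dhat s Δstar) = tstar ∧
      j Δstar = tstar * Mtot / (1 - γ) - (4 * γ * Anorm / (1 - γ) ^ 2) * tstar ^ 2 := by

  intro Ts Γtot Mtot tstar Dhat C j Δstar hΔC hmax
  have hγ : (0:ℝ) < 1 - γ := by linarith
  have hXne : ∀ s, Nonempty (X s) := fun s =>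
    Fintype.card_pos_iff.mp (by have := hX s; omega)
  have hTs : ∀ s, 0 < Ts s := by
    intro s
    haveI := hXne s
    exact Finset.sum_pos (fun a _ => by exact_mod_cast Nat.lt_of_lt_of_le Nat.zero_lt_one (hn s a))
      Finset.univ_nonempty
  have hΓtot : 0 < Γtot := Finset.sum_pos (fun s _ => hΓ s) Finset.univ_nonempty
  have hΓT : ∀ s, 0 < Γ s / Ts s := fun s => div_pos (hΓ s) (hTs s)
  have hMtot : 0 < Mtot := by
    have hs : 0 < ∑ s, Γ s / Ts s * M s :=
      Finset.sum_pos (fun s _ => mul_pos (hΓT s) (hMpos s)) Finset.univ_nonempty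
    exact mul_pos (by positivity) hs
  have htpos : 0 < tstar := by
    have : 0 < (1 - γ) * Mtot := mul_pos hγ hMtot
    exact div_pos this (by positivity)
  set c := 4 * γ * Anorm / (1 - γ) ^ 2 with hcdef
  have hcpos : 0 < c := by rw [hcdef]; positivity
  have hkey : Mtot / (1 - γ) = 2 * c * tstar := by
    show Mtot / (1 - γ) = 2 * c * ((1 - γ) * Mtot / (8 * γ * Anorm))
    rw [hcdef]
    field_simp
    ring
  -- the per-state maximizers
  choose Δm hm1 hm2 hm3 using fun s => (hM s).1
  have hmS : ∀ s, ∑ a, (n s a : ℝ) * |Δm s a| = Ts s := by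
    intro s
    have h := hm1 s
    have hT := (hTs s).ne'
    show _ = ∑ a, (n s a : ℝ)
    field_simp at h
    rw [div_eq_iff (show (∑ a, (n s a : ℝ)) ≠ 0 from hT)] at h
    linarith
  -- membership in C unfolded
  have hC0 : ∀ s, ∑ a, (n s a : ℝ) * Δstar s a = 0 := hΔC
  -- the scaled candidate
  set Δc : ∀ s, X s → ℝ := fun s a => tstar * Δm s a with hΔcdef
  have hcC : Δc ∈ C := by
    intro s
    have : ∑ a, (n s a : ℝ) * (tstar * Δm s a) = tstar * ∑ a, (n s a : ℝ) * Δm s a := by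
      rw [Finset.mul_sum]; exact Finset.sum_congr rfl fun a _ => by ring
    show ∑ a, (n s a : ℝ) * (tstar * Δm s a) = 0
    rw [this, hm2 s, mul_zero]
  have hDc : ∀ s, Dhat s Δc = tstar := by
    intro s
    show (1 / Ts s) * ∑ a, (n s a : ℝ) * |tstar * Δm s a| = tstar
    have h1 : ∀ a : X s, (n s a : ℝ) * |tstar * Δm s a|
        = tstar * ((n s a : ℝ) * |Δm s a|) := fun a => by
      rw [abs_mul, abs_of_nonneg htpos.le]; ring
    rw [Finset.sum_congr rfl fun a _ => h1 a, ← Finset.mul_sum, hmS s]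
    field_simp [(hTs s).ne']
  have hsupc : Finset.univ.sup' Finset.univ_nonempty (fun s => Dhat s Δc) = tstar := by
    rw [show (fun s => Dhat s Δc) = fun _ => tstar from funext hDc, Finset.sup'_const]
  have hLc : ∀ s, ∑ a, (n s a : ℝ) * Δc s a * A s a = tstar * M s := by
    intro s
    rw [hm3 s, Finset.mul_sum]
    exact Finset.sum_congr rfl fun a _ => by show (n s a:ℝ) * (tstar * Δm s a) * A s a = _; ring
  have hsumM : ∀ t : ℝ, ∑ s, Γ s / Ts s * (t * M s) = t * (Γtot * Mtot) := by
    intro t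
    have h1 : ∑ s, Γ s / Ts s * (t * M s) = t * ∑ s, Γ s / Ts s * M s := by
      rw [Finset.mul_sum]; exact Finset.sum_congr rfl fun s _ => by ring
    rw [h1]
    have : Γtot * Mtot = ∑ s, Γ s / Ts s * M s := by
      show Γtot * ((1 / Γtot) * _) = _
      field_simp
    rw [this]
  have hjc : j Δc = tstar * Mtot / (1 - γ) - c * tstar ^ 2 := by
    show (1 / ((1 - γ) * Γtot)) * ∑ s, (Γ s / Ts s) * ∑ a, (n s a : ℝ) * Δc s a * A s a
      - (4 * γ * Anorm / (1 - γ) ^ 2) *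
        (Finset.univ.sup' Finset.univ_nonempty (fun s => Dhat s Δc)) ^ 2 = _
    rw [hsupc, ← hcdef]
    have : ∑ s, (Γ s / Ts s) * ∑ a, (n s a : ℝ) * Δc s a * A s a
        = tstar * (Γtot * Mtot) := by
      rw [Finset.sum_congr rfl fun s _ => by rw [hLc s]]
      exact hsumM tstar
    rw [this]
    congr 1
    field_simp
  have hlow : tstar * Mtot / (1 - γ) - c * tstar ^ 2 ≤ j Δstar := hjc ▸ hmax Δc hcC
  -- upper bound
  set d := Finset.univ.sup' Finset.univ_nonempty (fun s => Dhat s Δstar) with hddef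
  have hds0 : ∀ s, 0 ≤ Dhat s Δstar := by
    intro s
    have : (0:ℝ) ≤ ∑ a, (n s a : ℝ) * |Δstar s a| :=
      Finset.sum_nonneg fun a _ => mul_nonneg (Nat.cast_nonneg _) (abs_nonneg _)
    exact mul_nonneg (one_div_pos.mpr (hTs s)).le this
  have hdle : ∀ s, Dhat s Δstar ≤ d := by
    intro s
    rw [hddef]
    exact Finset.le_sup' (fun s => Dhat s Δstar) (Finset.mem_univ s)
  obtain ⟨s₀⟩ := ‹Nonempty S›
  have hd0 : 0 ≤ d := le_trans (hds0 s₀) (hdle s₀)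
  have hbound : ∀ s, ∑ a, (n s a : ℝ) * Δstar s a * A s a ≤ Dhat s Δstar * M s := by
    intro s
    rcases (hds0 s).eq_or_lt with h0 | hpos
    · have hsum0 : ∑ a, (n s a : ℝ) * |Δstar s a| = 0 := by
        have h := h0.symm
        have hT := (hTs s).ne'
        have h' : (1 / Ts s) * ∑ a, (n s a : ℝ) * |Δstar s a| = 0 := h
        field_simp at h'
        rw [mul_zero] at h'
        exact h'
      have hzero : ∀ a : X s, Δstar s a = 0 := by
        intro a
        have := (Finset.sum_eq_zero_iff_of_nonneg
          (fun a _ => mul_nonneg (Nat.cast_nonneg _) (abs_nonneg _))).mp hsum0 a (Finset.mem_univ a)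
        have hna : (0:ℝ) < (n s a : ℝ) := by
          exact_mod_cast Nat.lt_of_lt_of_le Nat.zero_lt_one (hn s a)
        have : |Δstar s a| = 0 := by
          rcases mul_eq_zero.mp this with h | h
          · exact absurd h hna.ne'
          · exact h
        exact abs_eq_zero.mp this
      have : ∑ a, (n s a : ℝ) * Δstar s a * A s a = 0 :=
        Finset.sum_eq_zero fun a _ => by rw [hzero a]; ring
      rw [this, ← h0, zero_mul]
    · set ds := Dhat s Δstar with hdsdef
      have hsum : ∑ a, (n s a : ℝ) * |Δstar s a| = ds * Ts s := by
        have h : ds = (1 / Ts s) * ∑ a, (n s a : ℝ) * |Δstar s a| := hdsdef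
        have hT := (hTs s).ne'
        field_simp at h
        linarith
      have hle := (hM s).2 ⟨fun a => Δstar s a / ds, ?_, ?_, rfl⟩
      · have heq : ∑ a, (n s a : ℝ) * (Δstar s a / ds) * A s a
            = (∑ a, (n s a : ℝ) * Δstar s a * A s a) / ds := by
          rw [Finset.sum_div]; exact Finset.sum_congr rfl fun a _ => by ring
        rw [heq, div_le_iff₀ hpos] at hle
        linarith [hle]
      · have h1 : ∀ a : X s, (n s a : ℝ) * |Δstar s a / ds|
            = ((n s a : ℝ) * |Δstar s a|) / ds := fun a => by
          rw [abs_div, abs_of_pos hpos]; ring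
        rw [Finset.sum_congr rfl fun a _ => h1 a, ← Finset.sum_div, hsum]
        show (1 / Ts s) * (ds * Ts s / ds) = 1
        field_simp [(hTs s).ne', hpos.ne']
      · have : ∑ a, (n s a : ℝ) * (Δstar s a / ds)
            = (∑ a, (n s a : ℝ) * Δstar s a) / ds := by
          rw [Finset.sum_div]; exact Finset.sum_congr rfl fun a _ => by ring
        rw [this, hC0 s, zero_div]
  have hbound2 : ∀ s, ∑ a, (n s a : ℝ) * Δstar s a * A s a ≤ d * M s := fun s =>
    (hbound s).trans (mul_le_mul_of_nonneg_right (hdle s) (hMpos s).le)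
  have hup : j Δstar ≤ d * Mtot / (1 - γ) - c * d ^ 2 := by
    show (1 / ((1 - γ) * Γtot)) * ∑ s, (Γ s / Ts s) * ∑ a, (n s a : ℝ) * Δstar s a * A s a
      - (4 * γ * Anorm / (1 - γ) ^ 2) *
        (Finset.univ.sup' Finset.univ_nonempty (fun s => Dhat s Δstar)) ^ 2 ≤ _
    rw [← hcdef, ← hddef]
    have h1 : ∑ s, (Γ s / Ts s) * ∑ a, (n s a : ℝ) * Δstar s a * A s a
        ≤ d * (Γtot * Mtot) := by
      calc ∑ s, (Γ s / Ts s) * ∑ a, (n s a : ℝ) * Δstar s a * A s a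
          ≤ ∑ s, Γ s / Ts s * (d * M s) :=
            Finset.sum_le_sum fun s _ => mul_le_mul_of_nonneg_left (hbound2 s) (hΓT s).le
        _ = d * (Γtot * Mtot) := hsumM d
    have h2 : (1 / ((1 - γ) * Γtot)) * (d * (Γtot * Mtot)) = d * Mtot / (1 - γ) := by
      field_simp
    have h3 : (1 / ((1 - γ) * Γtot)) * ∑ s, (Γ s / Ts s) * ∑ a, (n s a : ℝ) * Δstar s a * A s a
        ≤ d * Mtot / (1 - γ) := by
      rw [← h2]
      exact mul_le_mul_of_nonneg_left h1 (by positivity)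
    linarith
  have hquad : ∀ t : ℝ, t * Mtot / (1 - γ) - c * t ^ 2
      ≤ tstar * Mtot / (1 - γ) - c * tstar ^ 2 := by
    intro t
    have e1 : t * Mtot / (1 - γ) = t * (2 * c * tstar) := by rw [mul_div_assoc, hkey]
    have e2 : tstar * Mtot / (1 - γ) = tstar * (2 * c * tstar) := by rw [mul_div_assoc, hkey]
    rw [e1, e2]
    nlinarith [sq_nonneg (t - tstar), hcpos.le]
  have hjeq : j Δstar = tstar * Mtot / (1 - γ) - c * tstar ^ 2 :=
    le_antisymm ((hup.trans (hquad d))) hlow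
  have hfd : d * Mtot / (1 - γ) - c * d ^ 2 = tstar * Mtot / (1 - γ) - c * tstar ^ 2 :=
    le_antisymm (hquad d) (by linarith)
  have hd : d = tstar := by
    have e1 : d * Mtot / (1 - γ) = d * (2 * c * tstar) := by rw [mul_div_assoc, hkey]
    have e2 : tstar * Mtot / (1 - γ) = tstar * (2 * c * tstar) := by rw [mul_div_assoc, hkey]
    rw [e1, e2] at hfd
    have h3 : c * (d - tstar) ^ 2 = 0 := by linear_combination -hfd
    have h4 : (d - tstar) ^ 2 = 0 := by
      rcases mul_eq_zero.mp h3 with h | h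
      · exact absurd h hcpos.ne'
      · exact h
    have := pow_eq_zero_iff (two_ne_zero) |>.mp h4
    linarith [this]
  -- linear part equality
  have hLsum : ∑ s, (Γ s / Ts s) * ∑ a, (n s a : ℝ) * Δstar s a * A s a
      = tstar * (Γtot * Mtot) := by
    have hj' : (1 / ((1 - γ) * Γtot)) * ∑ s, (Γ s / Ts s) * ∑ a, (n s a : ℝ) * Δstar s a * A s a
        - c * d ^ 2 = tstar * Mtot / (1 - γ) - c * tstar ^ 2 := by
      have : j Δstar = (1 / ((1 - γ) * Γtot)) *
          ∑ s, (Γ s / Ts s) * ∑ a, (n s a : ℝ) * Δstar s a * A s a - c * d ^ 2 := by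
        show (1 / ((1 - γ) * Γtot)) * ∑ s, (Γ s / Ts s) * ∑ a, (n s a : ℝ) * Δstar s a * A s a
          - (4 * γ * Anorm / (1 - γ) ^ 2) *
            (Finset.univ.sup' Finset.univ_nonempty (fun s => Dhat s Δstar)) ^ 2 = _
        rw [← hcdef, ← hddef]
      rw [← this]
      exact hjeq
    rw [hd] at hj'
    have h5 : (1 / ((1 - γ) * Γtot)) *
        ∑ s, (Γ s / Ts s) * ∑ a, (n s a : ℝ) * Δstar s a * A s a
        = tstar * Mtot / (1 - γ) := by linarith
    have hne : ((1 - γ) * Γtot) ≠ 0 := by positivity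
    rw [one_div, inv_mul_eq_div, div_eq_iff hne] at h5
    rw [h5]
    field_simp
  have hper : ∀ s, ∑ a, (n s a : ℝ) * Δstar s a * A s a = tstar * M s := by
    intro s
    have hsum0 : ∑ s, (Γ s / Ts s) * (tstar * M s - ∑ a, (n s a : ℝ) * Δstar s a * A s a) = 0 := by
      have : ∑ s, (Γ s / Ts s) * (tstar * M s - ∑ a, (n s a : ℝ) * Δstar s a * A s a)
          = (∑ s, Γ s / Ts s * (tstar * M s))
            - ∑ s, (Γ s / Ts s) * ∑ a, (n s a : ℝ) * Δstar s a * A s a := by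
        rw [← Finset.sum_sub_distrib]
        exact Finset.sum_congr rfl fun s _ => by ring
      rw [this, hsumM tstar, hLsum]
      ring
    have hnn : ∀ s ∈ Finset.univ, (0:ℝ) ≤ (Γ s / Ts s) *
        (tstar * M s - ∑ a, (n s a : ℝ) * Δstar s a * A s a) := by
      intro s _
      have := hbound2 s
      rw [hd] at this
      exact mul_nonneg (hΓT s).le (by linarith)
    have hz := set_option maxHeartbeats 1000000 in (Finset.sum_eq_zero_iff_of_nonneg hnn).mp hsum0 s (Finset.mem_univ s)
    rcases mul_eq_zero.mp hz with h | h
    · exact absurd h (hΓT s).ne'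
    · linarith
  have hDs : ∀ s, Dhat s Δstar = tstar := by
    intro s
    have h1 : tstar * M s ≤ Dhat s Δstar * M s := by
      rw [← hper s]; exact hbound s
    have h2 : tstar ≤ Dhat s Δstar := le_of_mul_le_mul_right (by linarith) (hMpos s)
    have h3 : Dhat s Δstar ≤ tstar := hd ▸ hdle s
    linarith
  exact ⟨fun s => ⟨hDs s, hper s⟩, hd, hjeq⟩
end

section
/- Assume M(s) > 0 for every s ∈ S. Then for every δ > 0: if Δ* ∈ C maximizes j^APC(·, δ) over C (i.e., j^APC(Δ', δ) ≤ j^APC(Δ*, δ) for every Δ' ∈ C), then D̂(s, Δ*) ≤ δ for every s ∈ S. That is, any maximizer of the surrogated APC-Obj objective automatically satisfies the per-state TV trust-region constraint of radius δ, even though the optimization is unconstrained apart from the zero-sum condition. -/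
set_option maxHeartbeats 4000000

private lemma half_max (x : ℝ) : max x 0 = (x + |x|)/2 := by
  rcases le_total 0 x with h | h
  · rw [abs_of_nonneg h, max_eq_left h]; ring
  · rw [abs_of_nonpos h, max_eq_right h]; ring

private lemma clip_bounds (x ε : ℝ) (hε : 0 ≤ ε) :
    max (max (-(max (|x| - ε) 0)) (min x (max (|x| - ε) 0))) 0 ≤ max (x - ε) 0 ∧
    max (-(max (-(max (|x| - ε) 0)) (min x (max (|x| - ε) 0)))) 0 ≤ max (-x - ε) 0 := by
  rcases le_total 0 x with h | h
  · rw [abs_of_nonneg h]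
    constructor <;> (simp only [max_def, min_def]; split_ifs <;> linarith)
  · rw [abs_of_nonpos h]
    constructor <;> (simp only [max_def, min_def]; split_ifs <;> linarith)

private lemma clip_self (x : ℝ) : max (-(max |x| 0)) (min x (max |x| 0)) = x := by
  rw [max_eq_left (abs_nonneg x), min_eq_left (le_abs_self x), max_eq_right (neg_abs_le x)]

private lemma aux_sum_shift {ι : Type} [Fintype ι] (n : ι → ℝ) (hn : ∀ a, 1 ≤ n a)
    (w : ι → ℝ) {ε : ℝ} (hε : 0 ≤ ε) :
    ∑ a, n a * max (w a - ε) 0 ≤ max ((∑ a, n a * max (w a) 0) - ε) 0 := by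
  classical
  by_cases h : ∃ a, ε < w a
  · obtain ⟨a₀, ha₀⟩ := h
    refine le_trans ?_ (le_max_left _ _)
    have h1 : ∑ a, n a * max (w a - ε) 0 ≤
        ∑ a, (n a * max (w a) 0 - (if a = a₀ then ε else 0)) := by
      apply Finset.sum_le_sum
      intro a _
      by_cases ha : a = a₀
      · subst ha
        rw [if_pos rfl]
        rw [max_eq_left (by linarith : (0:ℝ) ≤ w a - ε), max_eq_left (by linarith : (0:ℝ) ≤ w a)]
        nlinarith [hn a]
      · simp only [if_neg ha, sub_zero]
        exact mul_le_mul_of_nonneg_left (max_le_max (by linarith) le_rfl)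
          (by linarith [hn a])
    rw [Finset.sum_sub_distrib, Finset.sum_ite_eq' Finset.univ a₀ (fun _ => ε)] at h1
    simpa using h1
  · push_neg at h
    have h0 : ∀ a ∈ Finset.univ, n a * max (w a - ε) 0 = 0 := by
      intro a _; rw [max_eq_right (by linarith [h a]), mul_zero]
    rw [Finset.sum_congr rfl h0]
    simp

/-- any maximizer of the surrogated APC-Obj objective over the
zero-sum set automatically satisfies the per-state TV trust-region
constraint of radius δ. -/
theorem stmt_6 {S : Type} [Fintype S] [Nonempty S]
    (X : S → Type) [∀ s, Fintype (X s)]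
    (hX : ∀ s, 2 ≤ Fintype.card (X s))
    (n : ∀ s, X s → ℕ) (hn : ∀ s a, 1 ≤ n s a)
    (A : ∀ s, X s → ℝ)
    (Anorm : ℝ) (hA : IsGreatest {x : ℝ | ∃ s, ∃ a : X s, x = |A s a|} Anorm)
    (hApos : 0 < Anorm)
    (Γ : S → ℝ) (hΓ : ∀ s, 0 < Γ s)
    (γ : ℝ) (hγ0 : 0 < γ) (hγ1 : γ < 1)
    (M : S → ℝ)
    (hM : ∀ s, IsGreatest {y : ℝ | ∃ Δ : X s → ℝ,
        (1 / (∑ a, (n s a : ℝ))) * (∑ a, (n s a : ℝ) * |Δ a|) = 1 ∧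
        (∑ a, (n s a : ℝ) * Δ a) = 0 ∧
        y = ∑ a, (n s a : ℝ) * Δ a * A s a} (M s))
    (hMpos : ∀ s, 0 < M s) :
    let Ts : S → ℝ := fun s => ∑ a, (n s a : ℝ)
    let Γtot : ℝ := ∑ s, Γ s
    let Dhat : S → (∀ s', X s' → ℝ) → ℝ :=
      fun s Δ => (1 / Ts s) * ∑ a, (n s a : ℝ) * |Δ s a|
    let C : Set (∀ s, X s → ℝ) := {Δ | ∀ s, ∑ a, (n s a : ℝ) * Δ s a = 0}
    let clip : ℝ → ℝ → ℝ := fun x B => max (-(max B 0)) (min x (max B 0))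
    let Cs : S → (∀ s', X s' → ℝ) → ℝ → ℝ := fun s Δ δ =>
      (1 / Ts s) * ∑ a, (n s a : ℝ) * clip (Δ s a) (Ts s * (δ - Dhat s Δ) + |Δ s a|)
    let jAPC : (∀ s, X s → ℝ) → ℝ → ℝ := fun Δ δ =>
      (1 / ((1 - γ) * Γtot)) * ∑ s, (Γ s / Ts s) * ∑ a, (n s a : ℝ) *
        (clip (Δ s a) (Ts s * (δ - Dhat s Δ) + |Δ s a|) * A s a + (1 - Cs s Δ δ) * A s a)
    ∀ δ : ℝ, 0 < δ → ∀ Δstar ∈ C, (∀ Δ' ∈ C, jAPC Δ' δ ≤ jAPC Δstar δ) →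
      ∀ s, Dhat s Δstar ≤ δ := by
  intro Ts Γtot Dhat C clip Cs jAPC δ hδ Δstar hC hmax s
  classical
  by_contra hcon
  push_neg at hcon
  -- basic positivity
  haveI hXne : ∀ s', Nonempty (X s') := fun s' => Fintype.card_pos_iff.mp (by
    have := hX s'; omega)
  have hnpos : ∀ s' (a : X s'), (0:ℝ) < (n s' a : ℝ) := by
    intro s' a; exact_mod_cast Nat.lt_of_lt_of_le Nat.zero_lt_one (hn s' a)
  have hT : ∀ s', 0 < Ts s' := by
    intro s'
    exact Finset.sum_pos (fun a _ => hnpos s' a) Finset.univ_nonempty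
  have hz : ∀ s', ∑ a, (n s' a : ℝ) * Δstar s' a = 0 := hC
  -- data for state s
  obtain ⟨Δhat, hh1, hh2, hh3⟩ := (hM s).1
  set d : ℝ := Dhat s Δstar with hd_def
  have hd : δ < d := hcon
  have hsum_abs : ∑ a, (n s a : ℝ) * |Δstar s a| = Ts s * d := by
    have hT' := (hT s).ne'
    rw [hd_def]
    show _ = Ts s * ((1 / Ts s) * ∑ a, (n s a : ℝ) * |Δstar s a|)
    field_simp
  set ε : ℝ := Ts s * (d - δ) with hε_def
  have hε : 0 < ε := mul_pos (hT s) (by linarith)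
  -- the competitor
  set Δ' : ∀ s', X s' → ℝ := Function.update Δstar s (fun a => δ * Δhat a) with hΔ'def
  have hupd : Δ' s = fun a => δ * Δhat a := Function.update_self s _ Δstar
  have hΔ'C : Δ' ∈ C := by
    intro s'
    by_cases hss : s' = s
    · subst hss
      rw [hupd]
      have : ∑ a, (n s' a : ℝ) * (δ * Δhat a) = δ * ∑ a, (n s' a : ℝ) * Δhat a := by
        rw [Finset.mul_sum]; exact Finset.sum_congr rfl fun a _ => by ring
      rw [this, hh2, mul_zero]
    · rw [hΔ'def, Function.update_of_ne hss]
      exact hz s'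
  -- value at the competitor for state s
  have habs' : ∀ a : X s, |Δ' s a| = δ * |Δhat a| := by
    intro a; rw [hupd]
    simp only []
    rw [abs_mul, abs_of_pos hδ]
  have hDh' : Dhat s Δ' = δ := by
    show (1 / Ts s) * ∑ a, (n s a : ℝ) * |Δ' s a| = δ
    have e1 : ∑ a, (n s a : ℝ) * |Δ' s a| = δ * ∑ a, (n s a : ℝ) * |Δhat a| := by
      rw [Finset.mul_sum]; exact Finset.sum_congr rfl fun a _ => by rw [habs' a]; ring
    rw [e1]
    calc (1 / Ts s) * (δ * ∑ a, (n s a : ℝ) * |Δhat a|)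
        = δ * ((1 / Ts s) * ∑ a, (n s a : ℝ) * |Δhat a|) := by ring
      _ = δ := by rw [hh1, mul_one]
  have hclip' : ∀ a : X s,
      clip (Δ' s a) (Ts s * (δ - Dhat s Δ') + |Δ' s a|) = Δ' s a := by
    intro a
    rw [hDh']
    have e : Ts s * (δ - δ) + |Δ' s a| = |Δ' s a| := by ring
    rw [e]
    exact clip_self _
  have hCs' : Cs s Δ' δ = 0 := by
    show (1 / Ts s) * ∑ a, (n s a : ℝ) *
      clip (Δ' s a) (Ts s * (δ - Dhat s Δ') + |Δ' s a|) = 0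
    have e1 : ∑ a, (n s a : ℝ) * clip (Δ' s a) (Ts s * (δ - Dhat s Δ') + |Δ' s a|)
        = δ * ∑ a, (n s a : ℝ) * Δhat a := by
      rw [Finset.mul_sum]
      refine Finset.sum_congr rfl fun a _ => ?_
      rw [hclip' a, hupd]
      simp only []
      ring
    rw [e1, hh2, mul_zero, mul_zero]
  have hnew : ∑ a, (n s a : ℝ) *
      (clip (Δ' s a) (Ts s * (δ - Dhat s Δ') + |Δ' s a|) * A s a + (1 - Cs s Δ' δ) * A s a)
      = δ * M s + ∑ a, (n s a : ℝ) * A s a := by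
    rw [hh3]
    have e1 : ∀ a ∈ Finset.univ, (n s a : ℝ) *
        (clip (Δ' s a) (Ts s * (δ - Dhat s Δ') + |Δ' s a|) * A s a + (1 - Cs s Δ' δ) * A s a)
        = δ * ((n s a : ℝ) * Δhat a * A s a) + (n s a : ℝ) * A s a := by
      intro a _
      rw [hclip' a, hCs', hupd]
      simp only []
      ring
    rw [Finset.sum_congr rfl e1, Finset.sum_add_distrib, ← Finset.mul_sum]
  -- the clipped values at Δstar, for state s
  set c : X s → ℝ := fun a => clip (Δstar s a) (Ts s * (δ - Dhat s Δstar) + |Δstar s a|)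
    with hc_def
  have hceq : ∀ a : X s,
      clip (Δstar s a) (Ts s * (δ - Dhat s Δstar) + |Δstar s a|) = c a := fun a => rfl
  have hcb : ∀ a : X s, max (c a) 0 ≤ max (Δstar s a - ε) 0 ∧
      max (-(c a)) 0 ≤ max (-(Δstar s a) - ε) 0 := by
    intro a
    have hbnd : Ts s * (δ - Dhat s Δstar) + |Δstar s a| = |Δstar s a| - ε := by
      rw [hε_def, ← hd_def]; ring
    have : c a = max (-(max (|Δstar s a| - ε) 0)) (min (Δstar s a) (max (|Δstar s a| - ε) 0)) := by
      rw [hc_def]; simp only []; rw [hbnd]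
    rw [this]
    exact clip_bounds _ _ hε.le
  -- sums of positive/negative parts of Δstar s
  have hP : ∑ a, (n s a : ℝ) * max (Δstar s a) 0 = Ts s * d / 2 := by
    have e : ∀ a ∈ Finset.univ, (n s a : ℝ) * max (Δstar s a) 0
        = ((n s a : ℝ) * Δstar s a + (n s a : ℝ) * |Δstar s a|) / 2 := by
      intro a _; rw [half_max]; ring
    rw [Finset.sum_congr rfl e, ← Finset.sum_div, Finset.sum_add_distrib, hz s, hsum_abs]
    ring
  have hN : ∑ a, (n s a : ℝ) * max (-(Δstar s a)) 0 = Ts s * d / 2 := by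
    have e : ∀ a ∈ Finset.univ, (n s a : ℝ) * max (-(Δstar s a)) 0
        = (-((n s a : ℝ) * Δstar s a) + (n s a : ℝ) * |Δstar s a|) / 2 := by
      intro a _; rw [half_max, abs_neg]; ring
    rw [Finset.sum_congr rfl e, ← Finset.sum_div, Finset.sum_add_distrib,
      Finset.sum_neg_distrib, hz s, hsum_abs]
    ring
  have hnn : ∀ a : X s, (1:ℝ) ≤ (n s a : ℝ) := fun a => by exact_mod_cast hn s a
  have hSplus : ∑ a, (n s a : ℝ) * max (c a) 0 ≤ max (Ts s * d / 2 - ε) 0 := by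
    calc ∑ a, (n s a : ℝ) * max (c a) 0
        ≤ ∑ a, (n s a : ℝ) * max (Δstar s a - ε) 0 :=
          Finset.sum_le_sum fun a _ => mul_le_mul_of_nonneg_left (hcb a).1 (hnpos s a).le
      _ ≤ max ((∑ a, (n s a : ℝ) * max (Δstar s a) 0) - ε) 0 :=
          aux_sum_shift _ hnn _ hε.le
      _ = max (Ts s * d / 2 - ε) 0 := by rw [hP]
  have hSminus : ∑ a, (n s a : ℝ) * max (-(c a)) 0 ≤ max (Ts s * d / 2 - ε) 0 := by
    calc ∑ a, (n s a : ℝ) * max (-(c a)) 0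
        ≤ ∑ a, (n s a : ℝ) * max (-(Δstar s a) - ε) 0 :=
          Finset.sum_le_sum fun a _ => mul_le_mul_of_nonneg_left (hcb a).2 (hnpos s a).le
      _ ≤ max ((∑ a, (n s a : ℝ) * max (-(Δstar s a)) 0) - ε) 0 :=
          aux_sum_shift _ hnn _ hε.le
      _ = max (Ts s * d / 2 - ε) 0 := by rw [hN]
  have hm : max (Ts s * d / 2 - ε) 0 < Ts s * δ / 2 := by
    apply max_lt
    · rw [hε_def]; nlinarith [hT s, hd]
    · nlinarith [hT s, hδ]
  -- centered advantages
  obtain ⟨amax, -, hamax⟩ := Finset.exists_max_image Finset.univ (A s) Finset.univ_nonempty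
  obtain ⟨amin, -, hamin⟩ := Finset.exists_min_image Finset.univ (A s) Finset.univ_nonempty
  set K : ℝ := ∑ a, (n s a : ℝ) * A s a with hK_def
  set Abar : ℝ := K / Ts s with hAbar_def
  have hAbar_le : Abar ≤ A s amax := by
    rw [hAbar_def, div_le_iff₀ (hT s), hK_def]
    calc ∑ a, (n s a : ℝ) * A s a ≤ ∑ a, (n s a : ℝ) * A s amax :=
          Finset.sum_le_sum fun a _ =>
            mul_le_mul_of_nonneg_left (hamax a (Finset.mem_univ a)) (hnpos s a).le
      _ = A s amax * Ts s := by rw [← Finset.sum_mul]; ring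
  have hle_Abar : A s amin ≤ Abar := by
    rw [hAbar_def, le_div_iff₀ (hT s), hK_def]
    calc A s amin * Ts s = ∑ a, (n s a : ℝ) * A s amin := by rw [← Finset.sum_mul]; ring
      _ ≤ ∑ a, (n s a : ℝ) * A s a :=
          Finset.sum_le_sum fun a _ =>
            mul_le_mul_of_nonneg_left (hamin a (Finset.mem_univ a)) (hnpos s a).le
  set U : ℝ := A s amax - Abar with hU_def
  set L : ℝ := Abar - A s amin with hL_def
  have hU : 0 ≤ U := by rw [hU_def]; linarith
  have hL : 0 ≤ L := by rw [hL_def]; linarith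
  -- termwise bound
  have hterm : ∀ a ∈ Finset.univ, (n s a : ℝ) * c a * (A s a - Abar)
      ≤ (n s a : ℝ) * (max (c a) 0 * U + max (-(c a)) 0 * L) := by
    intro a _
    have hcsplit : c a = max (c a) 0 - max (-(c a)) 0 := by
      rcases le_total 0 (c a) with h | h
      · rw [max_eq_left h, max_eq_right (by linarith)]; ring
      · rw [max_eq_right h, max_eq_left (by linarith)]; ring
    have e1 : max (c a) 0 * (A s a - Abar) ≤ max (c a) 0 * U :=
      mul_le_mul_of_nonneg_left
        (by rw [hU_def]; linarith [hamax a (Finset.mem_univ a)]) (le_max_right _ _)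
    have e2 : max (-(c a)) 0 * (-(A s a - Abar)) ≤ max (-(c a)) 0 * L :=
      mul_le_mul_of_nonneg_left
        (by rw [hL_def]; linarith [hamin a (Finset.mem_univ a)]) (le_max_right _ _)
    have r1 : c a * (A s a - Abar)
        = max (c a) 0 * (A s a - Abar) + max (-(c a)) 0 * (-(A s a - Abar)) := by
      linear_combination (A s a - Abar) * hcsplit
    calc (n s a : ℝ) * c a * (A s a - Abar) = (n s a : ℝ) * (c a * (A s a - Abar)) := by ring
      _ ≤ (n s a : ℝ) * (max (c a) 0 * U + max (-(c a)) 0 * L) :=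
          mul_le_mul_of_nonneg_left (by linarith [e1, e2, r1]) (hnpos s a).le
  have hGsum : ∑ a, (n s a : ℝ) * c a * (A s a - Abar)
      ≤ U * (∑ a, (n s a : ℝ) * max (c a) 0) + L * (∑ a, (n s a : ℝ) * max (-(c a)) 0) := by
    calc ∑ a, (n s a : ℝ) * c a * (A s a - Abar)
        ≤ ∑ a, (n s a : ℝ) * (max (c a) 0 * U + max (-(c a)) 0 * L) :=
          Finset.sum_le_sum hterm
      _ = U * (∑ a, (n s a : ℝ) * max (c a) 0) + L * (∑ a, (n s a : ℝ) * max (-(c a)) 0) := by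
          rw [Finset.mul_sum, Finset.mul_sum, ← Finset.sum_add_distrib]
          exact Finset.sum_congr rfl fun a _ => by ring
  have hXnn : (0:ℝ) ≤ ∑ a, (n s a : ℝ) * max (c a) 0 :=
    Finset.sum_nonneg fun a _ => mul_nonneg (hnpos s a).le (le_max_right _ _)
  have hYnn : (0:ℝ) ≤ ∑ a, (n s a : ℝ) * max (-(c a)) 0 :=
    Finset.sum_nonneg fun a _ => mul_nonneg (hnpos s a).le (le_max_right _ _)
  have hG : ∑ a, (n s a : ℝ) * c a * (A s a - Abar) < δ * M s := by
    rcases eq_or_lt_of_le (add_nonneg hU hL) with h0 | hpos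
    · have hU0 : U = 0 := by linarith
      have hL0 : L = 0 := by linarith
      have hle0 : ∑ a, (n s a : ℝ) * c a * (A s a - Abar) ≤ 0 := by
        calc ∑ a, (n s a : ℝ) * c a * (A s a - Abar)
            ≤ U * (∑ a, (n s a : ℝ) * max (c a) 0)
              + L * (∑ a, (n s a : ℝ) * max (-(c a)) 0) := hGsum
          _ = 0 := by rw [hU0, hL0]; ring
      exact lt_of_le_of_lt hle0 (mul_pos hδ (hMpos s))
    · have hltA : A s amin < A s amax := by
        rw [hU_def, hL_def] at hpos; linarith
      have hne : amax ≠ amin := fun h => by rw [h] at hltA; exact lt_irrefl _ hltA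
      have htp : (Ts s / 2) * (A s amax - A s amin) ≤ M s := by
        apply (hM s).2
        refine ⟨fun a => (if a = amax then Ts s / (2 * (n s amax : ℝ)) else 0)
          + (if a = amin then -(Ts s / (2 * (n s amin : ℝ))) else 0), ?_, ?_, ?_⟩
        · have eabs : ∀ a ∈ Finset.univ, (n s a : ℝ) *
              |(if a = amax then Ts s / (2 * (n s amax : ℝ)) else 0)
                + (if a = amin then -(Ts s / (2 * (n s amin : ℝ))) else 0)|
              = (if a = amax then Ts s / 2 else 0) + (if a = amin then Ts s / 2 else 0) := by
            intro a _
            by_cases h1 : a = amax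
            · subst h1
              rw [if_neg (fun h => hne h), if_pos rfl, if_pos rfl,
                if_neg (fun h => hne h), add_zero, add_zero,
                abs_of_nonneg (by positivity : (0:ℝ) ≤ Ts s / (2 * (n s a : ℝ)))]
              field_simp [(hnpos s a).ne']
            · by_cases h2 : a = amin
              · subst h2
                rw [if_neg h1, if_pos rfl, if_neg h1, if_pos rfl, zero_add, zero_add,
                  abs_neg, abs_of_nonneg (by positivity : (0:ℝ) ≤ Ts s / (2 * (n s a : ℝ)))]
                field_simp [(hnpos s a).ne']
              · rw [if_neg h1, if_neg h2, if_neg h1, if_neg h2]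
                simp
          rw [Finset.sum_congr rfl eabs, Finset.sum_add_distrib]
          simp only [Finset.sum_ite_eq', Finset.mem_univ, if_true]
          field_simp [(hT s).ne']
          exact (div_eq_iff (hT s).ne').mpr (by ring)
        · have ev : ∀ a ∈ Finset.univ, (n s a : ℝ) *
              ((if a = amax then Ts s / (2 * (n s amax : ℝ)) else 0)
                + (if a = amin then -(Ts s / (2 * (n s amin : ℝ))) else 0))
              = (if a = amax then Ts s / 2 else 0) + (if a = amin then -(Ts s / 2) else 0) := by
            intro a _
            by_cases h1 : a = amax
            · subst h1
              rw [if_neg (fun h => hne h), if_pos rfl, if_pos rfl, if_neg (fun h => hne h)]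
              field_simp [(hnpos s a).ne']; ring
            · by_cases h2 : a = amin
              · subst h2
                rw [if_neg h1, if_pos rfl, if_neg h1, if_pos rfl]
                field_simp [(hnpos s a).ne']; ring
              · rw [if_neg h1, if_neg h2, if_neg h1, if_neg h2]
                simp
          rw [Finset.sum_congr rfl ev, Finset.sum_add_distrib]
          simp only [Finset.sum_ite_eq', Finset.mem_univ, if_true]
          ring
        · have ev : ∀ a ∈ Finset.univ, (n s a : ℝ) *
              ((if a = amax then Ts s / (2 * (n s amax : ℝ)) else 0)
                + (if a = amin then -(Ts s / (2 * (n s amin : ℝ))) else 0)) * A s a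
              = (if a = amax then Ts s / 2 * A s a else 0)
                + (if a = amin then -(Ts s / 2 * A s a) else 0) := by
            intro a _
            by_cases h1 : a = amax
            · subst h1
              rw [if_neg (fun h => hne h), if_pos rfl, if_pos rfl, if_neg (fun h => hne h)]
              field_simp [(hnpos s a).ne']; ring
            · by_cases h2 : a = amin
              · subst h2
                rw [if_neg h1, if_pos rfl, if_neg h1, if_pos rfl]
                field_simp [(hnpos s a).ne']; ring
                
              · rw [if_neg h1, if_neg h2, if_neg h1, if_neg h2]
                simp
          rw [Finset.sum_congr rfl ev, Finset.sum_add_distrib]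
          simp only [Finset.sum_ite_eq', Finset.mem_univ, if_true]
          ring
      have hXb : ∑ a, (n s a : ℝ) * max (c a) 0 < Ts s * δ / 2 := lt_of_le_of_lt hSplus hm
      have hYb : ∑ a, (n s a : ℝ) * max (-(c a)) 0 < Ts s * δ / 2 := lt_of_le_of_lt hSminus hm
      have hcomb : U * (∑ a, (n s a : ℝ) * max (c a) 0)
          + L * (∑ a, (n s a : ℝ) * max (-(c a)) 0) < (U + L) * (Ts s * δ / 2) := by
        rcases lt_or_eq_of_le hU with hU' | hU'
        · nlinarith [mul_lt_mul_of_pos_left hXb hU', mul_le_mul_of_nonneg_left hYb.le hL]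
        · have hL' : 0 < L := by linarith
          nlinarith [mul_lt_mul_of_pos_left hYb hL', mul_le_mul_of_nonneg_left hXb.le hU]
      calc ∑ a, (n s a : ℝ) * c a * (A s a - Abar)
          ≤ U * (∑ a, (n s a : ℝ) * max (c a) 0)
            + L * (∑ a, (n s a : ℝ) * max (-(c a)) 0) := hGsum
        _ < (U + L) * (Ts s * δ / 2) := hcomb
        _ = δ * ((Ts s / 2) * (A s amax - A s amin)) := by rw [hU_def, hL_def]; ring
        _ ≤ δ * M s := mul_le_mul_of_nonneg_left htp hδ.le
  -- value at Δstar for state s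
  have hstar : ∑ a, (n s a : ℝ) * (c a * A s a + (1 - Cs s Δstar δ) * A s a)
      < δ * M s + K := by
    have h1 : Cs s Δstar δ = 1 / Ts s * ∑ a, (n s a : ℝ) * c a := rfl
    have e1 : ∀ a ∈ Finset.univ, (n s a : ℝ) * (c a * A s a + (1 - Cs s Δstar δ) * A s a)
        = (n s a : ℝ) * c a * A s a + (1 - Cs s Δstar δ) * ((n s a : ℝ) * A s a) :=
      fun a _ => by ring
    have e2 : ∀ a ∈ Finset.univ, (n s a : ℝ) * c a * (A s a - Abar)
        = (n s a : ℝ) * c a * A s a - (n s a : ℝ) * c a * Abar := fun a _ => by ring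
    have hexp : ∑ a, (n s a : ℝ) * (c a * A s a + (1 - Cs s Δstar δ) * A s a)
        = (∑ a, (n s a : ℝ) * c a * (A s a - Abar)) + K := by
      rw [Finset.sum_congr rfl e1, Finset.sum_add_distrib, ← Finset.mul_sum,
        Finset.sum_congr rfl e2, Finset.sum_sub_distrib, ← Finset.sum_mul, h1, hAbar_def,
        ← hK_def]
      field_simp [(hT s).ne']
      ring
    rw [hexp]
    linarith [hG]
  -- other states are unchanged
  have hother : ∀ s', s' ≠ s →
      (Γ s' / Ts s') * (∑ a, (n s' a : ℝ) *
        (clip (Δ' s' a) (Ts s' * (δ - Dhat s' Δ') + |Δ' s' a|) * A s' a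
          + (1 - Cs s' Δ' δ) * A s' a))
      = (Γ s' / Ts s') * (∑ a, (n s' a : ℝ) *
        (clip (Δstar s' a) (Ts s' * (δ - Dhat s' Δstar) + |Δstar s' a|) * A s' a
          + (1 - Cs s' Δstar δ) * A s' a)) := by
    intro s' hss
    have e : Δ' s' = Δstar s' := by rw [hΔ'def]; exact Function.update_of_ne hss _ _
    have eD : Dhat s' Δ' = Dhat s' Δstar := by
      show (1 / Ts s') * ∑ a, (n s' a : ℝ) * |Δ' s' a| =
        (1 / Ts s') * ∑ a, (n s' a : ℝ) * |Δstar s' a|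
      rw [e]
    have eC : Cs s' Δ' δ = Cs s' Δstar δ := by
      show (1 / Ts s') * ∑ a, (n s' a : ℝ) *
          clip (Δ' s' a) (Ts s' * (δ - Dhat s' Δ') + |Δ' s' a|) =
        (1 / Ts s') * ∑ a, (n s' a : ℝ) *
          clip (Δstar s' a) (Ts s' * (δ - Dhat s' Δstar) + |Δstar s' a|)
      rw [eD, e]
    rw [e, eD, eC]
  have hcoef : 0 < 1 / ((1 - γ) * Γtot) := by
    apply one_div_pos.mpr
    apply mul_pos (by linarith)
    exact Finset.sum_pos (fun i _ => hΓ i) Finset.univ_nonempty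
  have hlt_s : (Γ s / Ts s) * (∑ a, (n s a : ℝ) *
      (clip (Δstar s a) (Ts s * (δ - Dhat s Δstar) + |Δstar s a|) * A s a
        + (1 - Cs s Δstar δ) * A s a))
      < (Γ s / Ts s) * (∑ a, (n s a : ℝ) *
      (clip (Δ' s a) (Ts s * (δ - Dhat s Δ') + |Δ' s a|) * A s a
        + (1 - Cs s Δ' δ) * A s a)) := by
    apply mul_lt_mul_of_pos_left _ (div_pos (hΓ s) (hT s))
    rw [hnew]
    calc ∑ a, (n s a : ℝ) * (clip (Δstar s a) (Ts s * (δ - Dhat s Δstar) + |Δstar s a|)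
            * A s a + (1 - Cs s Δstar δ) * A s a)
        = ∑ a, (n s a : ℝ) * (c a * A s a + (1 - Cs s Δstar δ) * A s a) :=
          Finset.sum_congr rfl fun a _ => by rw [hceq a]
      _ < δ * M s + K := hstar
  have hjlt : jAPC Δstar δ < jAPC Δ' δ := by
    show (1 / ((1 - γ) * Γtot)) * (∑ s', (Γ s' / Ts s') * ∑ a, (n s' a : ℝ) *
        (clip (Δstar s' a) (Ts s' * (δ - Dhat s' Δstar) + |Δstar s' a|) * A s' a
          + (1 - Cs s' Δstar δ) * A s' a))
      < (1 / ((1 - γ) * Γtot)) * (∑ s', (Γ s' / Ts s') * ∑ a, (n s' a : ℝ) *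
        (clip (Δ' s' a) (Ts s' * (δ - Dhat s' Δ') + |Δ' s' a|) * A s' a
          + (1 - Cs s' Δ' δ) * A s' a))
    apply mul_lt_mul_of_pos_left _ hcoef
    apply Finset.sum_lt_sum
    · intro i _
      by_cases his : i = s
      · subst his; exact hlt_s.le
      · exact (hother i his).ge
    · exact ⟨s, Finset.mem_univ s, hlt_s⟩
  have hle := hmax Δ' hΔ'C
  linarith
end

section
/- Assume M(s) > 0 for every s ∈ S, and set δ^APC := t* = (1−γ)·M/(8γ·‖Â‖∞) (which is then positive). Then for every Δ ∈ C: Δ maximizes j^APC(·, δ^APC) over C if and only if Δ maximizes j over C. Moreover, the common set of maximizers is exactly { Δ ∈ C : for every s ∈ S, D̂(s,Δ) = t* and Σ_{a∈X_s} n_{s,a} Δ_{s,a} Â_{s,a} = t*·M(s) }; in particular the unconstrained clipping-based APC-Obj objective and the penalized sample-based TV-TRPO objective produce the same set of updates. -/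
namespace Stmt7Aux

lemma abs_eq_two_max (x : ℝ) : |x| = 2 * max x 0 - x := by
  rcases le_total 0 x with h | h
  · rw [abs_of_nonneg h, max_eq_left h]; ring
  · rw [abs_of_nonpos h, max_eq_right h]; ring

lemma abs_eq_two_max' (x : ℝ) : |x| = 2 * max (-x) 0 + x := by
  rcases le_total 0 x with h | h
  · rw [abs_of_nonneg h, max_eq_right (by linarith : -x ≤ 0)]; ring
  · rw [abs_of_nonpos h, max_eq_left (by linarith : 0 ≤ -x)]; ring

lemma pt3 (x u : ℝ) (hu : 0 ≤ u) : max x 0 - max (x - u) 0 = min (max x 0) u := by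
  rcases le_total x 0 with h | h
  · rw [max_eq_right h, max_eq_right (by linarith : x - u ≤ 0), min_eq_left hu]; ring
  · rcases le_total x u with h' | h'
    · rw [max_eq_left h, max_eq_right (by linarith : x - u ≤ 0), min_eq_left h']; ring
    · rw [max_eq_left h, max_eq_left (by linarith : 0 ≤ x - u), min_eq_right h']; ring

lemma pt1 (x u : ℝ) (hu : 0 ≤ u) :
    max (max (-(max (|x| - u) 0)) (min x (max (|x| - u) 0))) 0 = max (x - u) 0 := by
  rcases le_total 0 x with h | h
  · rw [abs_of_nonneg h]
    have hb0 : (0:ℝ) ≤ max (x - u) 0 := le_max_right _ _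
    have hbx : max (x - u) 0 ≤ x := max_le (by linarith) h
    rw [min_eq_right hbx, max_eq_right (by linarith : -(max (x-u) 0) ≤ max (x-u) 0),
      max_eq_left hb0]
  · rw [abs_of_nonpos h]
    have hb0 : (0:ℝ) ≤ max (-x - u) 0 := le_max_right _ _
    have hxb : x ≤ -(max (-x - u) 0) := by
      have : max (-x - u) 0 ≤ -x := max_le (by linarith) (by linarith)
      linarith
    rw [min_eq_left (by linarith : x ≤ max (-x - u) 0), max_eq_left hxb,
      max_eq_right (by linarith : -(max (-x-u) 0) ≤ 0),
      max_eq_right (by linarith : x - u ≤ 0)]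

lemma pt2 (x u : ℝ) (hu : 0 ≤ u) :
    max (-(max (-(max (|x| - u) 0)) (min x (max (|x| - u) 0)))) 0 = max (-x - u) 0 := by
  rcases le_total 0 x with h | h
  · rw [abs_of_nonneg h]
    have hb0 : (0:ℝ) ≤ max (x - u) 0 := le_max_right _ _
    have hbx : max (x - u) 0 ≤ x := max_le (by linarith) h
    rw [min_eq_right hbx, max_eq_right (by linarith : -(max (x-u) 0) ≤ max (x-u) 0),
      max_eq_right (by linarith : -(max (x-u) 0) ≤ 0),
      max_eq_right (by linarith : -x - u ≤ 0)]
  · rw [abs_of_nonpos h]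
    have hb0 : (0:ℝ) ≤ max (-x - u) 0 := le_max_right _ _
    have hxb : x ≤ -(max (-x - u) 0) := by
      have : max (-x - u) 0 ≤ -x := max_le (by linarith) (by linarith)
      linarith
    rw [min_eq_left (by linarith : x ≤ max (-x - u) 0), max_eq_left hxb, neg_neg,
      max_eq_left hb0]

lemma sum_abs_eq {α : Type} [Fintype α] (n : α → ℕ) (v : α → ℝ)
    (hz : ∑ a, (n a : ℝ) * v a = 0) :
    ∑ a, (n a : ℝ) * |v a| = 2 * ∑ a, (n a : ℝ) * max (v a) 0 := by
  have h : ∀ a ∈ Finset.univ, (n a : ℝ) * |v a|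
      = 2 * ((n a : ℝ) * max (v a) 0) - (n a : ℝ) * v a := by
    intro a _; rw [abs_eq_two_max]; ring
  rw [Finset.sum_congr rfl h, Finset.sum_sub_distrib, hz, ← Finset.mul_sum]; ring

lemma sum_abs_eq' {α : Type} [Fintype α] (n : α → ℕ) (v : α → ℝ)
    (hz : ∑ a, (n a : ℝ) * v a = 0) :
    ∑ a, (n a : ℝ) * |v a| = 2 * ∑ a, (n a : ℝ) * max (-(v a)) 0 := by
  have h : ∀ a ∈ Finset.univ, (n a : ℝ) * |v a|
      = 2 * ((n a : ℝ) * max (-(v a)) 0) + (n a : ℝ) * v a := by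
    intro a _; rw [abs_eq_two_max']; ring
  rw [Finset.sum_congr rfl h, Finset.sum_add_distrib, hz, ← Finset.mul_sum]; ring

lemma T_ge_one {α : Type} [Fintype α] (hne : Nonempty α) (n : α → ℕ) (hn : ∀ a, 1 ≤ n a) :
    (1:ℝ) ≤ ∑ a, (n a : ℝ) := by
  obtain ⟨a0⟩ := hne
  calc (1:ℝ) ≤ (n a0 : ℝ) := by exact_mod_cast hn a0
    _ ≤ ∑ a, (n a : ℝ) :=
      Finset.single_le_sum (f := fun a => (n a : ℝ)) (fun a _ => by positivity)
        (Finset.mem_univ a0)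

lemma aux_lt {α : Type} [Fintype α] (hne : Nonempty α) (n : α → ℕ) (hn : ∀ a, 1 ≤ n a)
    (w : α → ℝ) (d e : ℝ) (hd : 0 < d) (he : 0 < e)
    (hz : ∑ a, (n a : ℝ) * w a = 0)
    (habs : ∑ a, (n a : ℝ) * |w a| = (∑ a, (n a : ℝ)) * (d + e)) :
    2 * ∑ a, (n a : ℝ) * max (w a - (∑ a, (n a : ℝ)) * e) 0 < (∑ a, (n a : ℝ)) * d := by
  have hT1 : (1:ℝ) ≤ ∑ a, (n a : ℝ) := T_ge_one hne n hn
  set T := ∑ a, (n a : ℝ) with hT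
  have hT0 : (0:ℝ) < T := by linarith
  have hTe : (0:ℝ) < T * e := by positivity
  have hmaxsum : 2 * ∑ a, (n a : ℝ) * max (w a) 0 = T * (d + e) := by
    rw [← sum_abs_eq n w hz]; exact habs
  have hsplit : ∑ a, (n a : ℝ) * max (w a - T * e) 0
      = ∑ a, (n a : ℝ) * max (w a) 0 - ∑ a, (n a : ℝ) * min (max (w a) 0) (T * e) := by
    rw [← Finset.sum_sub_distrib]
    refine Finset.sum_congr rfl fun a _ => ?_
    rw [← pt3 (w a) (T * e) (by positivity)]; ring
  have hkey : T * e < 2 * ∑ a, (n a : ℝ) * min (max (w a) 0) (T * e) := by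
    by_cases hex : ∃ a, T * e ≤ w a
    · obtain ⟨a0, ha0⟩ := hex
      have h1 : min (max (w a0) 0) (T * e) = T * e :=
        min_eq_right (le_trans ha0 (le_max_left _ _))
      have hn0 : (1:ℝ) ≤ (n a0 : ℝ) := by exact_mod_cast hn a0
      have hterm : T * e ≤ (n a0 : ℝ) * min (max (w a0) 0) (T * e) := by
        rw [h1]; nlinarith
      have hrest : T * e ≤ ∑ a, (n a : ℝ) * min (max (w a) 0) (T * e) :=
        le_trans hterm (Finset.single_le_sum
          (f := fun a => (n a : ℝ) * min (max (w a) 0) (T * e))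
          (fun a _ => by positivity) (Finset.mem_univ a0))
      linarith
    · push_neg at hex
      have h2 : ∀ a ∈ Finset.univ, (n a : ℝ) * min (max (w a) 0) (T * e)
          = (n a : ℝ) * max (w a) 0 := by
        intro a _
        rw [min_eq_left (max_le (le_of_lt (hex a)) (by positivity))]
      rw [Finset.sum_congr rfl h2]
      nlinarith
  linarith [hsplit, hmaxsum, hkey]

lemma scale_le {α : Type} [Fintype α] (n : α → ℕ) (hn : ∀ a, 1 ≤ n a) (A : α → ℝ) (M : ℝ)
    (hub : ∀ Δ : α → ℝ,
        (1 / (∑ a, (n a : ℝ))) * (∑ a, (n a : ℝ) * |Δ a|) = 1 →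
        (∑ a, (n a : ℝ) * Δ a) = 0 →
        (∑ a, (n a : ℝ) * Δ a * A a) ≤ M)
    (hT0 : (0:ℝ) < ∑ a, (n a : ℝ))
    (Δ : α → ℝ) (hz : ∑ a, (n a : ℝ) * Δ a = 0) :
    (∑ a, (n a : ℝ) * Δ a * A a)
      ≤ ((1 / (∑ a, (n a : ℝ))) * ∑ a, (n a : ℝ) * |Δ a|) * M := by
  have hS0 : (0:ℝ) ≤ ∑ a, (n a : ℝ) * |Δ a| :=
    Finset.sum_nonneg fun a _ => by positivity
  rcases eq_or_lt_of_le hS0 with hS | hS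
  · have hzero : ∀ a ∈ Finset.univ, (n a : ℝ) * Δ a * A a = 0 := by
      intro a _
      have h1 := (Finset.sum_eq_zero_iff_of_nonneg
        (fun a _ => by positivity)).mp hS.symm a (Finset.mem_univ a)
      have hna : (0:ℝ) < (n a : ℝ) := by exact_mod_cast hn a
      have h2 : Δ a = 0 := by
        rcases mul_eq_zero.mp h1 with h | h
        · exact absurd h (by positivity)
        · exact abs_eq_zero.mp h
      rw [h2]; ring
    rw [Finset.sum_eq_zero hzero, ← hS]
    simp
  · have hT : (∑ a, (n a : ℝ)) ≠ 0 := ne_of_gt hT0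
    have hSne : (∑ a, (n a : ℝ) * |Δ a|) ≠ 0 := ne_of_gt hS
    have hd0 : (0:ℝ) < (1 / (∑ a, (n a : ℝ))) * ∑ a, (n a : ℝ) * |Δ a| := by positivity
    set d := (1 / (∑ a, (n a : ℝ))) * ∑ a, (n a : ℝ) * |Δ a| with hd
    have e1 : ∑ a, (n a : ℝ) * |Δ a / d| = (∑ a, (n a : ℝ) * |Δ a|) / d := by
      have h : ∀ a ∈ Finset.univ, (n a : ℝ) * |Δ a / d| = ((n a : ℝ) * |Δ a|) / d := by
        intro a _; rw [abs_div, abs_of_pos hd0]; ring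
      rw [Finset.sum_congr rfl h, ← Finset.sum_div]
    have e2 : ∑ a, (n a : ℝ) * (Δ a / d) = 0 := by
      have : ∀ a ∈ Finset.univ, (n a : ℝ) * (Δ a / d) = ((n a : ℝ) * Δ a) / d := by
        intro a _; ring
      rw [Finset.sum_congr rfl this, ← Finset.sum_div, hz, zero_div]
    have e3 : ∑ a, (n a : ℝ) * (Δ a / d) * A a = (∑ a, (n a : ℝ) * Δ a * A a) / d := by
      have h : ∀ a ∈ Finset.univ, (n a : ℝ) * (Δ a / d) * A a = ((n a : ℝ) * Δ a * A a) / d := by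
        intro a _; ring
      rw [Finset.sum_congr rfl h, ← Finset.sum_div]
    have h1 : (1 / (∑ a, (n a : ℝ))) * (∑ a, (n a : ℝ) * |Δ a / d|) = 1 := by
      rw [e1, hd]
      field_simp
    have := hub (fun a => Δ a / d) h1 e2
    rw [e3, div_le_iff₀ hd0] at this
    linarith [this]

lemma clip_state {α : Type} [Fintype α] (hne : Nonempty α) (n : α → ℕ) (hn : ∀ a, 1 ≤ n a)
    (A : α → ℝ) (M δ : ℝ) (hδ : 0 < δ) (hM0 : 0 < M)
    (hub : ∀ Δ : α → ℝ,
        (1 / (∑ a, (n a : ℝ))) * (∑ a, (n a : ℝ) * |Δ a|) = 1 →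
        (∑ a, (n a : ℝ) * Δ a) = 0 →
        (∑ a, (n a : ℝ) * Δ a * A a) ≤ M)
    (Δ : α → ℝ) (hz : ∑ a, (n a : ℝ) * Δ a = 0)
    (T Dh : ℝ) (hT : T = ∑ a, (n a : ℝ))
    (hDh : Dh = (1 / T) * ∑ a, (n a : ℝ) * |Δ a|)
    (cl : α → ℝ)
    (hcl : ∀ a, cl a = max (-(max (T * (δ - Dh) + |Δ a|) 0))
        (min (Δ a) (max (T * (δ - Dh) + |Δ a|) 0)))
    (m : ℝ) (hm : m = (1 / T) * ∑ a, (n a : ℝ) * cl a)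
    (G : ℝ) (hG : G = (∑ a, (n a : ℝ) * cl a * A a) - m * ∑ a, (n a : ℝ) * A a) :
    G ≤ δ * M ∧
      ((Dh = δ ∧ (∑ a, (n a : ℝ) * Δ a * A a) = δ * M) ↔ G = δ * M) := by
  have hT1 : (1:ℝ) ≤ T := hT ▸ T_ge_one hne n hn
  have hT0 : (0:ℝ) < T := by linarith
  have hVle : (∑ a, (n a : ℝ) * Δ a * A a) ≤ Dh * M := by
    have := scale_le n hn A M hub (hT ▸ hT0) Δ hz
    rw [hDh, hT]; exact this
  rcases le_or_gt Dh δ with hle | hlt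
  · -- no clipping
    have hcleq : ∀ a, cl a = Δ a := by
      intro a
      have hB : (0:ℝ) ≤ T * (δ - Dh) + |Δ a| :=
        add_nonneg (mul_nonneg hT0.le (by linarith)) (abs_nonneg _)
      have h1 : Δ a ≤ T * (δ - Dh) + |Δ a| := by
        have := le_abs_self (Δ a); nlinarith
      have h2 : -(T * (δ - Dh) + |Δ a|) ≤ Δ a := by
        have := neg_abs_le (Δ a); nlinarith
      rw [hcl a, max_eq_left hB, min_eq_left h1, max_eq_right h2]
    have hm0 : m = 0 := by
      have h : ∀ a ∈ Finset.univ, (n a : ℝ) * cl a = (n a : ℝ) * Δ a := by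
        intro a _; rw [hcleq a]
      rw [hm, Finset.sum_congr rfl h, hz, mul_zero]
    have hGV : G = ∑ a, (n a : ℝ) * Δ a * A a := by
      have h : ∀ a ∈ Finset.univ, (n a : ℝ) * cl a * A a = (n a : ℝ) * Δ a * A a := by
        intro a _; rw [hcleq a]
      rw [hG, hm0, zero_mul, sub_zero, Finset.sum_congr rfl h]
    constructor
    · rw [hGV]; nlinarith
    · constructor
      · rintro ⟨_, h2⟩; rw [hGV, h2]
      · intro hGeq
        rw [hGV] at hGeq
        refine ⟨?_, hGeq⟩
        nlinarith
  · -- clipping active; strict inequality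
    have hu0 : (0:ℝ) < T * (Dh - δ) := mul_pos hT0 (by linarith)
    have hcl' : ∀ a, cl a = max (-(max (|Δ a| - T * (Dh - δ)) 0))
        (min (Δ a) (max (|Δ a| - T * (Dh - δ)) 0)) := by
      intro a
      rw [hcl a]
      congr 2 <;> ring_nf
    have hmT : m * T = ∑ a, (n a : ℝ) * cl a := by
      rw [hm]; field_simp
    have hzh : ∑ a, (n a : ℝ) * (cl a - m) = 0 := by
      have h : ∀ a ∈ Finset.univ, (n a : ℝ) * (cl a - m)
          = (n a : ℝ) * cl a - ((n a : ℝ)) * m := by intro a _; ring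
      rw [Finset.sum_congr rfl h, Finset.sum_sub_distrib, ← Finset.sum_mul, ← hT]
      linarith [hmT]
    have hGh : G = ∑ a, (n a : ℝ) * (cl a - m) * A a := by
      have h : ∀ a ∈ Finset.univ, (n a : ℝ) * (cl a - m) * A a
          = (n a : ℝ) * cl a * A a - m * ((n a : ℝ) * A a) := by intro a _; ring
      rw [hG, Finset.sum_congr rfl h, Finset.sum_sub_distrib, ← Finset.mul_sum]
    have hGle : G ≤ ((1 / T) * ∑ a, (n a : ℝ) * |cl a - m|) * M := by
      have := scale_le n hn A M hub (hT ▸ hT0) (fun a => cl a - m) hzh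
      rw [hGh, hT]; exact this
    have habsΔ : ∑ a, (n a : ℝ) * |Δ a| = T * Dh := by
      rw [hDh]; field_simp
    have key : ∑ a, (n a : ℝ) * |cl a - m| < T * δ := by
      rcases le_or_gt 0 m with hm0 | hm0
      · have e1 : ∑ a, (n a : ℝ) * |cl a - m| = 2 * ∑ a, (n a : ℝ) * max (cl a - m) 0 :=
          sum_abs_eq n (fun a => cl a - m) hzh
        have e2 : ∑ a, (n a : ℝ) * max (cl a - m) 0
            ≤ ∑ a, (n a : ℝ) * max (Δ a - T * (Dh - δ)) 0 := by
          refine Finset.sum_le_sum fun a _ => ?_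
          have h1 : max (cl a - m) 0 ≤ max (cl a) 0 := max_le_max (by linarith) le_rfl
          have h2 : max (cl a) 0 = max (Δ a - T * (Dh - δ)) 0 := by
            rw [hcl' a]; exact pt1 (Δ a) (T * (Dh - δ)) hu0.le
          have hna : (0:ℝ) ≤ (n a : ℝ) := by positivity
          rw [← h2]
          exact mul_le_mul_of_nonneg_left h1 hna
        have e4 : 2 * ∑ a, (n a : ℝ) * max (Δ a - T * (Dh - δ)) 0 < T * δ := by
          have := aux_lt hne n hn Δ δ (Dh - δ) hδ (by linarith) hz
            (by rw [habsΔ, ← hT]; ring)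
          rw [← hT] at this
          exact this
        linarith
      · have e1 : ∑ a, (n a : ℝ) * |cl a - m| = 2 * ∑ a, (n a : ℝ) * max (-(cl a - m)) 0 :=
          sum_abs_eq' n (fun a => cl a - m) hzh
        have e2 : ∑ a, (n a : ℝ) * max (-(cl a - m)) 0
            ≤ ∑ a, (n a : ℝ) * max (-(Δ a) - T * (Dh - δ)) 0 := by
          refine Finset.sum_le_sum fun a _ => ?_
          have h1 : max (-(cl a - m)) 0 ≤ max (-(cl a)) 0 := max_le_max (by linarith) le_rfl
          have h2 : max (-(cl a)) 0 = max (-(Δ a) - T * (Dh - δ)) 0 := by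
            rw [hcl' a]; exact pt2 (Δ a) (T * (Dh - δ)) hu0.le
          have hna : (0:ℝ) ≤ (n a : ℝ) := by positivity
          rw [← h2]
          exact mul_le_mul_of_nonneg_left h1 hna
        have hznegΔ : ∑ a, (n a : ℝ) * (-(Δ a)) = 0 := by
          have h : ∀ a ∈ Finset.univ, (n a : ℝ) * (-(Δ a)) = -((n a : ℝ) * Δ a) := by
            intro a _; ring
          rw [Finset.sum_congr rfl h, Finset.sum_neg_distrib, hz, neg_zero]
        have e4 : 2 * ∑ a, (n a : ℝ) * max (-(Δ a) - T * (Dh - δ)) 0 < T * δ := by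
          have := aux_lt hne n hn (fun a => -(Δ a)) δ (Dh - δ) hδ (by linarith) hznegΔ
            (by
              have h : ∀ a ∈ Finset.univ, (n a : ℝ) * |(-(Δ a))| = (n a : ℝ) * |Δ a| := by
                intro a _; rw [abs_neg]
              rw [Finset.sum_congr rfl h, habsΔ, ← hT]; ring)
          rw [← hT] at this
          exact this
        linarith
    have hDh' : (1 / T) * ∑ a, (n a : ℝ) * |cl a - m| < δ := by
      rw [div_mul_eq_mul_div, one_mul, div_lt_iff₀ hT0]
      linarith [key]
    have hGlt : G < δ * M := by
      calc G ≤ ((1 / T) * ∑ a, (n a : ℝ) * |cl a - m|) * M := hGle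
        _ < δ * M := by
          apply mul_lt_mul_of_pos_right hDh' hM0
    exact ⟨hGlt.le, by
      constructor
      · rintro ⟨h1, _⟩; exact absurd h1 (by linarith)
      · intro hGeq; exact absurd hGeq (ne_of_lt hGlt)⟩

end Stmt7Aux

/-- with δ^APC := t* > 0, a zero-sum Δ maximizes the surrogated
APC-Obj objective iff it maximizes the reduced sample-based TV-TRPO
objective, and the common maximizer set is exactly the set of Δ ∈ C with
per-state TV divergence t* and per-state advantage value t*·M(s). -/
theorem stmt_7 {S : Type} [Fintype S] [Nonempty S]
    (X : S → Type) [∀ s, Fintype (X s)]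
    (hX : ∀ s, 2 ≤ Fintype.card (X s))
    (n : ∀ s, X s → ℕ) (hn : ∀ s a, 1 ≤ n s a)
    (A : ∀ s, X s → ℝ)
    (Anorm : ℝ) (hA : IsGreatest {x : ℝ | ∃ s, ∃ a : X s, x = |A s a|} Anorm)
    (hApos : 0 < Anorm)
    (Γ : S → ℝ) (hΓ : ∀ s, 0 < Γ s)
    (γ : ℝ) (hγ0 : 0 < γ) (hγ1 : γ < 1)
    (M : S → ℝ)
    (hM : ∀ s, IsGreatest {y : ℝ | ∃ Δ : X s → ℝ,
        (1 / (∑ a, (n s a : ℝ))) * (∑ a, (n s a : ℝ) * |Δ a|) = 1 ∧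
        (∑ a, (n s a : ℝ) * Δ a) = 0 ∧
        y = ∑ a, (n s a : ℝ) * Δ a * A s a} (M s))
    (hMpos : ∀ s, 0 < M s) :
    let Ts : S → ℝ := fun s => ∑ a, (n s a : ℝ)
    let Γtot : ℝ := ∑ s, Γ s
    let Mtot : ℝ := (1 / Γtot) * ∑ s, (Γ s / Ts s) * M s
    let tstar : ℝ := (1 - γ) * Mtot / (8 * γ * Anorm)
    let Dhat : S → (∀ s', X s' → ℝ) → ℝ :=
      fun s Δ => (1 / Ts s) * ∑ a, (n s a : ℝ) * |Δ s a|
    let C : Set (∀ s, X s → ℝ) := {Δ | ∀ s, ∑ a, (n s a : ℝ) * Δ s a = 0}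
    let j : (∀ s, X s → ℝ) → ℝ := fun Δ =>
      (1 / ((1 - γ) * Γtot)) * ∑ s, (Γ s / Ts s) * ∑ a, (n s a : ℝ) * Δ s a * A s a
      - (4 * γ * Anorm / (1 - γ) ^ 2) *
          (Finset.univ.sup' Finset.univ_nonempty (fun s => Dhat s Δ)) ^ 2
    let clip : ℝ → ℝ → ℝ := fun x B => max (-(max B 0)) (min x (max B 0))
    let Cs : S → (∀ s', X s' → ℝ) → ℝ → ℝ := fun s Δ δ =>
      (1 / Ts s) * ∑ a, (n s a : ℝ) * clip (Δ s a) (Ts s * (δ - Dhat s Δ) + |Δ s a|)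
    let jAPC : (∀ s, X s → ℝ) → ℝ → ℝ := fun Δ δ =>
      (1 / ((1 - γ) * Γtot)) * ∑ s, (Γ s / Ts s) * ∑ a, (n s a : ℝ) *
        (clip (Δ s a) (Ts s * (δ - Dhat s Δ) + |Δ s a|) * A s a + (1 - Cs s Δ δ) * A s a)
    0 < tstar ∧
    ∀ Δ ∈ C,
      ((∀ Δ' ∈ C, jAPC Δ' tstar ≤ jAPC Δ tstar) ↔ (∀ Δ' ∈ C, j Δ' ≤ j Δ)) ∧
      ((∀ Δ' ∈ C, j Δ' ≤ j Δ) ↔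
        (∀ s, Dhat s Δ = tstar ∧
          (∑ a, (n s a : ℝ) * Δ s a * A s a) = tstar * M s)) := by
  intro Ts Γtot Mtot tstar Dhat C j clip Cs jAPC
  have hne : ∀ s, Nonempty (X s) := fun s =>
    Fintype.card_pos_iff.mp (by have := hX s; omega)
  have hTsdef : ∀ s, Ts s = ∑ a, (n s a : ℝ) := fun _ => rfl
  have hTs1 : ∀ s, (1:ℝ) ≤ Ts s := fun s => Stmt7Aux.T_ge_one (hne s) (n s) (hn s)
  have hTs0 : ∀ s, (0:ℝ) < Ts s := fun s => lt_of_lt_of_le one_pos (hTs1 s)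
  have hΓtot : 0 < Γtot := Finset.sum_pos (fun s _ => hΓ s) Finset.univ_nonempty
  have h1γ : 0 < 1 - γ := by linarith
  set SM : ℝ := ∑ s, (Γ s / Ts s) * M s with hSM
  have hSM0 : 0 < SM := Finset.sum_pos
    (fun s _ => mul_pos (div_pos (hΓ s) (hTs0 s)) (hMpos s)) Finset.univ_nonempty
  have hMtotdef : Mtot = (1 / Γtot) * SM := rfl
  have hMtot : 0 < Mtot := by rw [hMtotdef]; positivity
  have htsdef : tstar = (1 - γ) * Mtot / (8 * γ * Anorm) := rfl
  have htstar : 0 < tstar := by rw [htsdef]; positivity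
  refine ⟨htstar, ?_⟩
  set c : ℝ := 4 * γ * Anorm / (1 - γ) ^ 2 with hc
  have hc0 : 0 < c := div_pos (by positivity) (pow_pos h1γ 2)
  set c1 : ℝ := 1 / ((1 - γ) * Γtot) with hc1
  have hc10 : 0 < c1 := by rw [hc1]; positivity
  have hSMeq : Γtot * Mtot = SM := by
    rw [hMtotdef]; field_simp
  have hts_eq : c1 * SM = 2 * c * tstar := by
    rw [htsdef, hc, hc1, ← hSMeq]
    field_simp
    ring
  -- unfolding equations
  have hDdef : ∀ s Δ', Dhat s Δ' = (1 / Ts s) * ∑ a, (n s a : ℝ) * |Δ' s a| :=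
    fun _ _ => rfl
  have hjdef : ∀ Δ', j Δ' = c1 * (∑ s, (Γ s / Ts s) * ∑ a, (n s a : ℝ) * Δ' s a * A s a)
      - c * (Finset.univ.sup' Finset.univ_nonempty (fun s => Dhat s Δ')) ^ 2 :=
    fun _ => rfl
  have hclipdef : ∀ x B, clip x B = max (-(max B 0)) (min x (max B 0)) := fun _ _ => rfl
  have hCsdef : ∀ s Δ' δ', Cs s Δ' δ'
      = (1 / Ts s) * ∑ a, (n s a : ℝ) * clip (Δ' s a) (Ts s * (δ' - Dhat s Δ') + |Δ' s a|) :=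
    fun _ _ _ => rfl
  have hAPCdef : ∀ Δ' δ', jAPC Δ' δ' = c1 * ∑ s, (Γ s / Ts s) * ∑ a, (n s a : ℝ) *
      (clip (Δ' s a) (Ts s * (δ' - Dhat s Δ') + |Δ' s a|) * A s a
        + (1 - Cs s Δ' δ') * A s a) := fun _ _ => rfl
  have hub : ∀ s, ∀ Δs : X s → ℝ,
      (1 / (∑ a, (n s a : ℝ))) * (∑ a, (n s a : ℝ) * |Δs a|) = 1 →
      (∑ a, (n s a : ℝ) * Δs a) = 0 →
      (∑ a, (n s a : ℝ) * Δs a * A s a) ≤ M s :=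
    fun s Δs h1 h2 => (hM s).2 ⟨Δs, h1, h2, rfl⟩
  have hcoef : ∀ s, (0:ℝ) < Γ s / Ts s := fun s => div_pos (hΓ s) (hTs0 s)
  -- per-state clip facts
  have hGfact : ∀ Δ', Δ' ∈ C → ∀ s,
      ((∑ a, (n s a : ℝ) * clip (Δ' s a) (Ts s * (tstar - Dhat s Δ') + |Δ' s a|) * A s a)
          - Cs s Δ' tstar * ∑ a, (n s a : ℝ) * A s a) ≤ tstar * M s ∧
      ((Dhat s Δ' = tstar ∧ (∑ a, (n s a : ℝ) * Δ' s a * A s a) = tstar * M s) ↔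
        ((∑ a, (n s a : ℝ) * clip (Δ' s a) (Ts s * (tstar - Dhat s Δ') + |Δ' s a|) * A s a)
          - Cs s Δ' tstar * ∑ a, (n s a : ℝ) * A s a) = tstar * M s) :=
    fun Δ' hΔ' s => Stmt7Aux.clip_state (hne s) (n s) (hn s) (A s) (M s) tstar htstar
      (hMpos s) (hub s) (fun a => Δ' s a) (hΔ' s) (Ts s) (Dhat s Δ')
      (hTsdef s) (hDdef s Δ')
      (fun a => clip (Δ' s a) (Ts s * (tstar - Dhat s Δ') + |Δ' s a|))
      (fun a => hclipdef _ _) (Cs s Δ' tstar) (hCsdef s Δ' tstar) _ rfl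
  -- per-state value bound
  have hVle : ∀ Δ', Δ' ∈ C → ∀ s,
      (∑ a, (n s a : ℝ) * Δ' s a * A s a) ≤ Dhat s Δ' * M s := by
    intro Δ' hΔ' s
    have h := Stmt7Aux.scale_le (n s) (hn s) (A s) (M s) (hub s)
      (by rw [← hTsdef s]; exact hTs0 s) (fun a => Δ' s a) (hΔ' s)
    rw [hDdef s Δ', hTsdef s]
    exact h
  have hsup_le : ∀ Δ' s, Dhat s Δ'
      ≤ Finset.univ.sup' Finset.univ_nonempty (fun s => Dhat s Δ') :=
    fun Δ' s => Finset.le_sup' (fun s => Dhat s Δ') (Finset.mem_univ s)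
  set Jmax : ℝ := c1 * (tstar * SM) - c * tstar ^ 2 with hJmax
  set Amax : ℝ := c1 * ∑ s, (Γ s / Ts s) * (tstar * M s + ∑ a, (n s a : ℝ) * A s a)
    with hAmax
  have hsum_tM : ∀ t : ℝ, ∑ s, (Γ s / Ts s) * (t * M s) = t * SM := by
    intro t; rw [hSM, Finset.mul_sum]
    exact Finset.sum_congr rfl fun s _ => by ring
  have hphi : ∀ t : ℝ, c1 * (t * SM) - c * t ^ 2 ≤ Jmax := by
    intro t; rw [hJmax]
    nlinarith [mul_nonneg hc0.le (sq_nonneg (t - tstar)), hts_eq]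
  have hphi_lt : ∀ t : ℝ, t ≠ tstar → c1 * (t * SM) - c * t ^ 2 < Jmax := by
    intro t ht; rw [hJmax]
    have h2 : 0 < (t - tstar) ^ 2 := by
      have : t - tstar ≠ 0 := sub_ne_zero.mpr ht
      positivity
    nlinarith [mul_pos hc0 h2, hts_eq]
  -- j bounds
  have hjle : ∀ Δ' ∈ C, j Δ' ≤ Jmax := by
    intro Δ' hΔ'
    rw [hjdef Δ']
    set t := Finset.univ.sup' Finset.univ_nonempty (fun s => Dhat s Δ') with htdef
    have hL : (∑ s, (Γ s / Ts s) * ∑ a, (n s a : ℝ) * Δ' s a * A s a) ≤ t * SM := by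
      rw [← hsum_tM t]
      refine Finset.sum_le_sum fun s _ => ?_
      refine mul_le_mul_of_nonneg_left ?_ (hcoef s).le
      calc (∑ a, (n s a : ℝ) * Δ' s a * A s a) ≤ Dhat s Δ' * M s := hVle Δ' hΔ' s
        _ ≤ t * M s := mul_le_mul_of_nonneg_right (hsup_le Δ' s) (hMpos s).le
    calc c1 * (∑ s, (Γ s / Ts s) * ∑ a, (n s a : ℝ) * Δ' s a * A s a) - c * t ^ 2
        ≤ c1 * (t * SM) - c * t ^ 2 := by
          have := mul_le_mul_of_nonneg_left hL hc10.le
          linarith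
      _ ≤ Jmax := hphi t
  have hjeq : ∀ Δ' ∈ C, (∀ s, Dhat s Δ' = tstar ∧
      (∑ a, (n s a : ℝ) * Δ' s a * A s a) = tstar * M s) → j Δ' = Jmax := by
    intro Δ' hΔ' hp
    have hsup : Finset.univ.sup' Finset.univ_nonempty (fun s => Dhat s Δ') = tstar := by
      refine le_antisymm (Finset.sup'_le _ _ fun s _ => ((hp s).1).le) ?_
      obtain ⟨s0⟩ := (inferInstance : Nonempty S)
      rw [← (hp s0).1]
      exact hsup_le Δ' s0
    rw [hjdef Δ', hsup]
    have hL : (∑ s, (Γ s / Ts s) * ∑ a, (n s a : ℝ) * Δ' s a * A s a) = tstar * SM := by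
      rw [← hsum_tM tstar]
      exact Finset.sum_congr rfl fun s _ => by rw [(hp s).2]
    rw [hL, hJmax]
  have hjlt : ∀ Δ' ∈ C, ¬ (∀ s, Dhat s Δ' = tstar ∧
      (∑ a, (n s a : ℝ) * Δ' s a * A s a) = tstar * M s) → j Δ' < Jmax := by
    intro Δ' hΔ' hnp
    rw [hjdef Δ']
    set t := Finset.univ.sup' Finset.univ_nonempty (fun s => Dhat s Δ') with htdef
    by_cases htt : t = tstar
    · obtain ⟨s0, hs0⟩ := not_forall.mp hnp
      have hVlt : (∑ a, (n s0 a : ℝ) * Δ' s0 a * A s0 a) < tstar * M s0 := by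
        rcases eq_or_ne (Dhat s0 Δ') tstar with hd | hd
        · have hne' : (∑ a, (n s0 a : ℝ) * Δ' s0 a * A s0 a) ≠ tstar * M s0 :=
            fun hv => hs0 ⟨hd, hv⟩
          have hle' : (∑ a, (n s0 a : ℝ) * Δ' s0 a * A s0 a) ≤ tstar * M s0 := by
            have := hVle Δ' hΔ' s0; rw [hd] at this; exact this
          exact lt_of_le_of_ne hle' hne'
        · have hdlt : Dhat s0 Δ' < tstar := lt_of_le_of_ne (htt ▸ hsup_le Δ' s0) hd
          calc (∑ a, (n s0 a : ℝ) * Δ' s0 a * A s0 a) ≤ Dhat s0 Δ' * M s0 := hVle Δ' hΔ' s0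
            _ < tstar * M s0 := mul_lt_mul_of_pos_right hdlt (hMpos s0)
      have hL : (∑ s, (Γ s / Ts s) * ∑ a, (n s a : ℝ) * Δ' s a * A s a) < tstar * SM := by
        rw [← hsum_tM tstar]
        refine Finset.sum_lt_sum (fun s _ => ?_) ⟨s0, Finset.mem_univ s0, ?_⟩
        · refine mul_le_mul_of_nonneg_left ?_ (hcoef s).le
          calc (∑ a, (n s a : ℝ) * Δ' s a * A s a) ≤ Dhat s Δ' * M s := hVle Δ' hΔ' s
            _ ≤ tstar * M s := by
              refine mul_le_mul_of_nonneg_right ?_ (hMpos s).le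
              rw [← htt]; exact hsup_le Δ' s
        · exact mul_lt_mul_of_pos_left hVlt (hcoef s0)
      have h1 : c1 * (∑ s, (Γ s / Ts s) * ∑ a, (n s a : ℝ) * Δ' s a * A s a)
          < c1 * (tstar * SM) := mul_lt_mul_of_pos_left hL hc10
      rw [htt, hJmax]
      linarith
    · have hL : (∑ s, (Γ s / Ts s) * ∑ a, (n s a : ℝ) * Δ' s a * A s a) ≤ t * SM := by
        rw [← hsum_tM t]
        refine Finset.sum_le_sum fun s _ => ?_
        refine mul_le_mul_of_nonneg_left ?_ (hcoef s).le
        calc (∑ a, (n s a : ℝ) * Δ' s a * A s a) ≤ Dhat s Δ' * M s := hVle Δ' hΔ' s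
          _ ≤ t * M s := mul_le_mul_of_nonneg_right (hsup_le Δ' s) (hMpos s).le
      calc c1 * (∑ s, (Γ s / Ts s) * ∑ a, (n s a : ℝ) * Δ' s a * A s a) - c * t ^ 2
          ≤ c1 * (t * SM) - c * t ^ 2 := by
            have := mul_le_mul_of_nonneg_left hL hc10.le
            linarith
        _ < Jmax := hphi_lt t htt
  -- jAPC rearrangement
  have hsum_APC : ∀ Δ', jAPC Δ' tstar = c1 * ∑ s, (Γ s / Ts s) *
      (((∑ a, (n s a : ℝ) * clip (Δ' s a) (Ts s * (tstar - Dhat s Δ') + |Δ' s a|) * A s a)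
          - Cs s Δ' tstar * ∑ a, (n s a : ℝ) * A s a) + ∑ a, (n s a : ℝ) * A s a) := by
    intro Δ'
    rw [hAPCdef Δ' tstar]
    congr 1
    refine Finset.sum_congr rfl fun s _ => ?_
    congr 1
    have h : ∀ a ∈ Finset.univ, (n s a : ℝ) *
        (clip (Δ' s a) (Ts s * (tstar - Dhat s Δ') + |Δ' s a|) * A s a
          + (1 - Cs s Δ' tstar) * A s a)
        = (n s a : ℝ) * clip (Δ' s a) (Ts s * (tstar - Dhat s Δ') + |Δ' s a|) * A s a
          + (1 - Cs s Δ' tstar) * ((n s a : ℝ) * A s a) := by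
      intro a _; ring
    rw [Finset.sum_congr rfl h, Finset.sum_add_distrib, ← Finset.mul_sum]
    ring
  have hale : ∀ Δ' ∈ C, jAPC Δ' tstar ≤ Amax := by
    intro Δ' hΔ'
    rw [hsum_APC Δ', hAmax]
    refine mul_le_mul_of_nonneg_left ?_ hc10.le
    refine Finset.sum_le_sum fun s _ => ?_
    refine mul_le_mul_of_nonneg_left ?_ (hcoef s).le
    have := (hGfact Δ' hΔ' s).1
    linarith
  have haeq : ∀ Δ' ∈ C, (∀ s, Dhat s Δ' = tstar ∧
      (∑ a, (n s a : ℝ) * Δ' s a * A s a) = tstar * M s) → jAPC Δ' tstar = Amax := by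
    intro Δ' hΔ' hp
    rw [hsum_APC Δ', hAmax]
    congr 1
    refine Finset.sum_congr rfl fun s _ => ?_
    congr 1
    have hGeq := (hGfact Δ' hΔ' s).2.mp ⟨(hp s).1, (hp s).2⟩
    rw [hGeq]
  have halt : ∀ Δ' ∈ C, ¬ (∀ s, Dhat s Δ' = tstar ∧
      (∑ a, (n s a : ℝ) * Δ' s a * A s a) = tstar * M s) → jAPC Δ' tstar < Amax := by
    intro Δ' hΔ' hnp
    obtain ⟨s0, hs0⟩ := not_forall.mp hnp
    rw [hsum_APC Δ', hAmax]
    refine mul_lt_mul_of_pos_left ?_ hc10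
    refine Finset.sum_lt_sum (fun s _ => ?_) ⟨s0, Finset.mem_univ s0, ?_⟩
    · refine mul_le_mul_of_nonneg_left ?_ (hcoef s).le
      have := (hGfact Δ' hΔ' s).1
      linarith
    · refine mul_lt_mul_of_pos_left ?_ (hcoef s0)
      have hGlt : ((∑ a, (n s0 a : ℝ) * clip (Δ' s0 a)
            (Ts s0 * (tstar - Dhat s0 Δ') + |Δ' s0 a|) * A s0 a)
          - Cs s0 Δ' tstar * ∑ a, (n s0 a : ℝ) * A s0 a) < tstar * M s0 := by
        refine lt_of_le_of_ne (hGfact Δ' hΔ' s0).1 fun hGeq => ?_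
        exact hs0 ((hGfact Δ' hΔ' s0).2.mpr hGeq)
      linarith
  -- existence of a common maximizer
  have hex : ∃ Δstar, Δstar ∈ C ∧ (∀ s, Dhat s Δstar = tstar ∧
      (∑ a, (n s a : ℝ) * Δstar s a * A s a) = tstar * M s) := by
    choose Δop hop1 hop2 hop3 using fun s => (hM s).1
    refine ⟨fun s a => tstar * Δop s a, fun s => ?_, fun s => ?_⟩
    · show ∑ a, (n s a : ℝ) * (tstar * Δop s a) = 0
      have h : ∀ a ∈ Finset.univ, (n s a : ℝ) * (tstar * Δop s a)
          = tstar * ((n s a : ℝ) * Δop s a) := by intro a _; ring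
      rw [Finset.sum_congr rfl h, ← Finset.mul_sum, hop2 s, mul_zero]
    · constructor
      · show (1 / Ts s) * (∑ a, (n s a : ℝ) * |tstar * Δop s a|) = tstar
        have h : ∀ a ∈ Finset.univ, (n s a : ℝ) * |tstar * Δop s a|
            = tstar * ((n s a : ℝ) * |Δop s a|) := by
          intro a _; rw [abs_mul, abs_of_nonneg htstar.le]; ring
        rw [Finset.sum_congr rfl h, ← Finset.mul_sum]
        have h2 : (1 / Ts s) * (tstar * ∑ a, (n s a : ℝ) * |Δop s a|)
            = tstar * ((1 / (∑ a, (n s a : ℝ))) * ∑ a, (n s a : ℝ) * |Δop s a|) := by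
          rw [hTsdef s]; ring
        rw [h2, hop1 s, mul_one]
      · show ∑ a, (n s a : ℝ) * (tstar * Δop s a) * A s a = tstar * M s
        have h : ∀ a ∈ Finset.univ, (n s a : ℝ) * (tstar * Δop s a) * A s a
            = tstar * ((n s a : ℝ) * Δop s a * A s a) := by intro a _; ring
        rw [Finset.sum_congr rfl h, ← Finset.mul_sum, ← hop3 s]
  obtain ⟨Δstar, hΔstarC, hPstar⟩ := hex
  intro Δ hΔ
  have HJ : (∀ Δ' ∈ C, j Δ' ≤ j Δ) ↔ (∀ s, Dhat s Δ = tstar ∧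
      (∑ a, (n s a : ℝ) * Δ s a * A s a) = tstar * M s) := by
    constructor
    · intro hmax
      by_contra hnp
      have h1 : j Δ < Jmax := hjlt Δ hΔ hnp
      have h2 : j Δstar ≤ j Δ := hmax Δstar hΔstarC
      have h3 : j Δstar = Jmax := hjeq Δstar hΔstarC hPstar
      linarith
    · intro hp Δ' hΔ'
      rw [hjeq Δ hΔ hp]
      exact hjle Δ' hΔ'
  have HA : (∀ Δ' ∈ C, jAPC Δ' tstar ≤ jAPC Δ tstar) ↔ (∀ s, Dhat s Δ = tstar ∧
      (∑ a, (n s a : ℝ) * Δ s a * A s a) = tstar * M s) := by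
    constructor
    · intro hmax
      by_contra hnp
      have h1 : jAPC Δ tstar < Amax := halt Δ hΔ hnp
      have h2 : jAPC Δstar tstar ≤ jAPC Δ tstar := hmax Δstar hΔstarC
      have h3 : jAPC Δstar tstar = Amax := haeq Δstar hΔstarC hPstar
      linarith
    · intro hp Δ' hΔ'
      rw [haeq Δ hΔ hp]
      exact hale Δ' hΔ'
  exact ⟨HA.trans HJ.symm, HJ⟩
end

section
/- For every real x, every A > 0 and every k > 0: clip(x, ±(A − k·|x|)) = g^agg(x, A/(k+1), k). That is, the coupled APC-Obj clipping with ratio-dependent bound decomposes exactly into the three-regime aggregate gate with pass-through threshold C = A/(k+1): pass-through for |x| ≤ A/(k+1), rollback with slope −k for A/(k+1) < |x| < A/k, and zeroing for |x| ≥ A/k. -/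
/-- the coupled APC-Obj clipping with ratio-dependent bound
A − k·|x| decomposes exactly into the three-regime aggregate gate with
pass-through threshold C = A/(k+1). -/
theorem stmt_12 (x A k : ℝ) (hA : 0 < A) (hk : 0 < k) :
    let clip : ℝ → ℝ → ℝ := fun y B => max (-(max B 0)) (min y (max B 0))
    let gagg : ℝ → ℝ → ℝ → ℝ := fun y C κ =>
      if |y| ≤ C then y
      else if |y| < (1 + 1 / κ) * C then Real.sign y * (κ + 1) * C - κ * y
      else 0
    clip x (A - k * |x|) = gagg x (A / (k + 1)) k := by
  intro clip gagg
  simp only [clip, gagg]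
  have hk1 : (0:ℝ) < k + 1 := by linarith
  have habs : 0 ≤ |x| := abs_nonneg x
  by_cases h1 : |x| ≤ A / (k + 1)
  · rw [if_pos h1]
    rw [le_div_iff₀ hk1] at h1
    have hB : |x| ≤ A - k * |x| := by nlinarith
    have hB0 : 0 ≤ A - k * |x| := le_trans habs hB
    rw [max_eq_left hB0]
    have hx1 : x ≤ A - k * |x| := le_trans (le_abs_self x) hB
    have hx2 : -(A - k * |x|) ≤ x := by
      have := neg_abs_le x; linarith
    rw [min_eq_left hx1, max_eq_right hx2]
  · rw [if_neg h1]
    push_neg at h1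
    rw [div_lt_iff₀ hk1] at h1
    by_cases h2 : |x| < (1 + 1 / k) * (A / (k + 1))
    · rw [if_pos h2]
      have h2' : k * |x| < A := by
        have : (1 + 1 / k) * (A / (k + 1)) = A / k := by
          field_simp
        rw [this, lt_div_iff₀ hk] at h2; linarith
      have hB0 : 0 < A - k * |x| := by linarith
      rw [max_eq_left hB0.le]
      have hBx : A - k * |x| ≤ |x| := by nlinarith
      have hx0 : x ≠ 0 := by
        intro h; rw [h, abs_zero] at h1; nlinarith
      rcases lt_or_gt_of_ne hx0 with hneg | hpos
      · rw [Real.sign_of_neg hneg, abs_of_neg hneg] at *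
        have hmin : min x (A - k * -x) = x := min_eq_left (by linarith)
        rw [hmin, max_eq_left (by linarith)]
        field_simp; ring
      · rw [Real.sign_of_pos hpos, abs_of_pos hpos] at *
        have hmin : min x (A - k * x) = A - k * x := min_eq_right (by linarith)
        rw [hmin, max_eq_right (by linarith)]
        field_simp
    · rw [if_neg h2]
      push_neg at h2
      have h2' : A ≤ k * |x| := by
        have : (1 + 1 / k) * (A / (k + 1)) = A / k := by
          field_simp
        rw [this, div_le_iff₀ hk] at h2; linarith
      have hB0 : A - k * |x| ≤ 0 := by linarith
      rw [max_eq_right hB0, neg_zero]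
      rcases le_or_gt x 0 with hx | hx
      · rw [min_eq_left hx, max_eq_left hx]
      · rw [min_eq_right hx.le, max_eq_left le_rfl]
end

section
/- For every token i: l_i·u_i − l_i·v_i = log r_i − (1/T) Σ_{t=1}^T log r_t (note that (1/T) Σ_t log r_t = log s⁺ − log s⁻). Consequently, whenever |u_i| ≤ ε and |v_i| ≤ ε, the gated residual r̃_i := exp( clip(l_i·u_i, −ε, ε) − clip(l_i·v_i, −ε, ε) ) satisfies log r̃_i = log r_i − (1/T) Σ_{t=1}^T log r_t; i.e., when no clip saturates, the fiber gate is exactly the trajectory-mean-centered log-ratio. -/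
/-- the signed fiber-residual identity
l_i·u_i − l_i·v_i = log r_i − (1/T)Σ log r_t (with (1/T)Σ log r_t =
log s⁺ − log s⁻), and when no clip saturates the gated residual is exactly
the trajectory-mean-centered log-ratio. -/
theorem stmt_13 (T : ℕ) (hT : 1 ≤ T) (ε : ℝ) (hε : 0 < ε)
    (r : Fin T → ℝ) (hr : ∀ t, 0 < r t) :
    let logsp : ℝ := (1 / (T : ℝ)) * ∑ t, max (Real.log (r t)) 0
    let logsm : ℝ := (1 / (T : ℝ)) * ∑ t, max (-Real.log (r t)) 0
    let l : Fin T → ℝ := fun i => if 0 ≤ Real.log (r i) then 1 else -1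
    let slog : ℝ → ℝ := fun x => if x = 1 then logsp else logsm
    let u : Fin T → ℝ := fun i => l i * Real.log (r i) - slog (l i)
    let v : Fin T → ℝ := fun i => -slog (-(l i))
    let clip : ℝ → ℝ := fun x => max (-ε) (min x ε)
    ((1 / (T : ℝ)) * ∑ t, Real.log (r t) = logsp - logsm) ∧
    (∀ i, l i * u i - l i * v i = Real.log (r i) - (1 / (T : ℝ)) * ∑ t, Real.log (r t)) ∧
    (∀ i, |u i| ≤ ε → |v i| ≤ ε →
      Real.log (Real.exp (clip (l i * u i) - clip (l i * v i))) =
        Real.log (r i) - (1 / (T : ℝ)) * ∑ t, Real.log (r t)) := by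
  intro logsp logsm l slog u v clip
  have hsum : (1 / (T : ℝ)) * ∑ t, Real.log (r t) = logsp - logsm := by
    simp only [logsp, logsm]
    rw [← mul_sub, ← Finset.sum_sub_distrib]
    congr 1
    apply Finset.sum_congr rfl
    intro t _
    rcases le_total 0 (Real.log (r t)) with h | h
    · rw [max_eq_left h, max_eq_right (by linarith)]; ring
    · rw [max_eq_right h, max_eq_left (by linarith)]; ring
  have hkey : ∀ i, l i * u i - l i * v i =
      Real.log (r i) - (1 / (T : ℝ)) * ∑ t, Real.log (r t) := by
    intro i
    rw [hsum]
    simp only [l, u, v, slog]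
    by_cases h : 0 ≤ Real.log (r i) <;>
      simp [h, show (-1:ℝ) ≠ 1 by norm_num] <;> ring
  refine ⟨hsum, hkey, ?_⟩
  intro i hu hv
  have hl : |l i| = 1 := by simp only [l]; split <;> simp
  have hclip : ∀ x, |x| ≤ ε → clip x = x := by
    intro x hx
    rw [abs_le] at hx
    simp only [clip]
    rw [min_eq_left hx.2, max_eq_right hx.1]
  rw [Real.log_exp, hclip _ (by rw [abs_mul, hl, one_mul]; exact hu),
      hclip _ (by rw [abs_mul, hl, one_mul]; exact hv), hkey]
end

section
/- (i) If |u_i| ≤ ε and |v_i| ≤ ε for every token i, and log s⁺ ≤ C⁺ and log s⁻ ≤ C⁻, then 𝒢(r)_i = r_i for every token i; i.e., in the full pass-through regime the FiberPO gating map is the identity and the surrogate recovers the linear (importance-sampling) objective. (ii) There is an open neighborhood of the on-policy point (1, …, 1) in (0,∞)^T on which 𝒢 is the identity map; in particular 𝒢(1,…,1) = (1,…,1) and 𝒢 is differentiable at (1,…,1) with total derivative the identity, so the FiberPO surrogate agrees with the ungated objective to first order at on-policy. -/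
/-- (i) in the full pass-through regime the FiberPO gating map
is the identity; (ii) there is an open neighborhood of the on-policy point
(1,…,1) consisting of positive vectors on which 𝒢 = id, so 𝒢 fixes (1,…,1)
and is differentiable there with identity total derivative. -/
theorem stmt_14 (T : ℕ) (hT : 1 ≤ T) (ε Cp Cm : ℝ)
    (hε : 0 < ε) (hCp : 0 < Cp) (hCm : 0 < Cm) :
    let clip : ℝ → ℝ := fun x => max (-ε) (min x ε)
    let gagg : ℝ → ℝ → ℝ → ℝ := fun y C κ =>
      if |y| ≤ C then y
      else if |y| < (1 + 1 / κ) * C then Real.sign y * (κ + 1) * C - κ * y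
      else 0
    let logsp : (Fin T → ℝ) → ℝ := fun r => (1 / (T : ℝ)) * ∑ t, max (Real.log (r t)) 0
    let logsm : (Fin T → ℝ) → ℝ := fun r => (1 / (T : ℝ)) * ∑ t, max (-Real.log (r t)) 0
    let l : (Fin T → ℝ) → Fin T → ℝ := fun r i => if 0 ≤ Real.log (r i) then 1 else -1
    let slog : (Fin T → ℝ) → ℝ → ℝ := fun r x => if x = 1 then logsp r else logsm r
    let u : (Fin T → ℝ) → Fin T → ℝ := fun r i => l r i * Real.log (r i) - slog r (l r i)
    let v : (Fin T → ℝ) → Fin T → ℝ := fun r i => -slog r (-(l r i))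
    let G : (Fin T → ℝ) → Fin T → ℝ := fun r i =>
      Real.exp (gagg (logsp r) Cp (T : ℝ) - gagg (logsm r) Cm (T : ℝ)
        + clip (l r i * u r i) - clip (l r i * v r i))
    (∀ r : Fin T → ℝ, (∀ t, 0 < r t) →
      (∀ i, |u r i| ≤ ε) → (∀ i, |v r i| ≤ ε) → logsp r ≤ Cp → logsm r ≤ Cm →
      ∀ i, G r i = r i) ∧
    (∃ U : Set (Fin T → ℝ), IsOpen U ∧ (fun _ => (1 : ℝ)) ∈ U ∧
      (∀ r ∈ U, ∀ t, 0 < r t) ∧ (∀ r ∈ U, G r = r)) ∧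
    G (fun _ => 1) = (fun _ => 1) ∧
    HasFDerivAt G (ContinuousLinearMap.id ℝ (Fin T → ℝ)) (fun _ => 1) := by
  intro clip gagg logsp logsm l slog u v G
  have hclip : ∀ x : ℝ, |x| ≤ ε → clip x = x := by
    intro x hx
    rw [abs_le] at hx
    simp only [clip]
    rw [min_eq_left hx.2, max_eq_right hx.1]
  have hlsp0 : ∀ r : Fin T → ℝ, 0 ≤ logsp r := by
    intro r
    apply mul_nonneg (by positivity)
    exact Finset.sum_nonneg fun t _ => le_max_right _ _
  have hlsm0 : ∀ r : Fin T → ℝ, 0 ≤ logsm r := by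
    intro r
    apply mul_nonneg (by positivity)
    exact Finset.sum_nonneg fun t _ => le_max_right _ _
  have hgagg : ∀ y C : ℝ, |y| ≤ C → gagg y C (T : ℝ) = y := by
    intro y C h
    simp only [gagg, if_pos h]
  -- part (i)
  have key : ∀ r : Fin T → ℝ, (∀ t, 0 < r t) →
      (∀ i, |u r i| ≤ ε) → (∀ i, |v r i| ≤ ε) → logsp r ≤ Cp → logsm r ≤ Cm →
      ∀ i, G r i = r i := by
    intro r hr hu hv hp hm i
    have h1 : gagg (logsp r) Cp (T : ℝ) = logsp r :=
      hgagg _ _ (by rw [abs_of_nonneg (hlsp0 r)]; exact hp)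
    have h2 : gagg (logsm r) Cm (T : ℝ) = logsm r :=
      hgagg _ _ (by rw [abs_of_nonneg (hlsm0 r)]; exact hm)
    have hGr : G r i = Real.exp (logsp r - logsm r
        + clip (l r i * u r i) - clip (l r i * v r i)) := by
      simp only [G, h1, h2]
    by_cases hl : 0 ≤ Real.log (r i)
    · have hli : l r i = 1 := by simp [l, hl]
      have hcu : clip (l r i * u r i) = u r i := by
        rw [hli, one_mul]; exact hclip _ (hu i)
      have hcv : clip (l r i * v r i) = v r i := by
        rw [hli, one_mul]; exact hclip _ (hv i)
      rw [hGr, hcu, hcv]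
      have hui : u r i = Real.log (r i) - logsp r := by
        simp [u, hli, slog]
      have hvi : v r i = -logsm r := by
        simp [v, hli, slog, show (-1:ℝ) ≠ 1 by norm_num]
      rw [hui, hvi]
      rw [show logsp r - logsm r + (Real.log (r i) - logsp r) - -logsm r
          = Real.log (r i) by ring]
      exact Real.exp_log (hr i)
    · have hli : l r i = -1 := by simp [l, hl]
      have hcu : clip (l r i * u r i) = -u r i := by
        rw [hli, neg_one_mul]
        exact hclip _ (by rw [abs_neg]; exact hu i)
      have hcv : clip (l r i * v r i) = -v r i := by
        rw [hli, neg_one_mul]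
        exact hclip _ (by rw [abs_neg]; exact hv i)
      rw [hGr, hcu, hcv]
      have hui : u r i = -Real.log (r i) - logsm r := by
        simp [u, hli, slog, show (-1:ℝ) ≠ 1 by norm_num]
      have hvi : v r i = -logsp r := by
        simp [v, hli, slog]
      rw [hui, hvi]
      rw [show logsp r - logsm r + -(-Real.log (r i) - logsm r) - - -logsp r
          = Real.log (r i) by ring]
      exact Real.exp_log (hr i)
  refine ⟨key, ?_⟩
  -- neighborhood
  set m : ℝ := min ε (min Cp Cm) with hmdef
  have hm0 : 0 < m := lt_min hε (lt_min hCp hCm)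
  have hmε : m ≤ ε := min_le_left _ _
  have hmCp : m ≤ Cp := le_trans (min_le_right _ _) (min_le_left _ _)
  have hmCm : m ≤ Cm := le_trans (min_le_right _ _) (min_le_right _ _)
  set U : Set (Fin T → ℝ) :=
    Set.pi Set.univ (fun _ => Set.Ioo (Real.exp (-m)) (Real.exp m)) with hUdef
  have hUopen : IsOpen U := isOpen_set_pi Set.finite_univ (fun _ _ => isOpen_Ioo)
  have h1U : (fun _ => (1 : ℝ)) ∈ U := by
    intro t _
    constructor
    · calc Real.exp (-m) < Real.exp 0 := Real.exp_lt_exp.2 (by linarith)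
        _ = 1 := Real.exp_zero
    · calc (1 : ℝ) = Real.exp 0 := Real.exp_zero.symm
        _ < Real.exp m := Real.exp_lt_exp.2 hm0
  have hUpos : ∀ r ∈ U, ∀ t, 0 < r t := by
    intro r hrU t
    exact lt_trans (Real.exp_pos _) (hrU t (Set.mem_univ t)).1
  have hUlog : ∀ r ∈ U, ∀ t, |Real.log (r t)| ≤ m := by
    intro r hrU t
    have hpos := hUpos r hrU t
    have h := hrU t (Set.mem_univ t)
    rw [abs_le]
    constructor
    · exact le_of_lt ((Real.lt_log_iff_exp_lt hpos).2 h.1)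
    · exact le_of_lt ((Real.log_lt_iff_lt_exp hpos).2 h.2)
  have hUsp : ∀ r ∈ U, logsp r ≤ m := by
    intro r hrU
    have : ∑ t, max (Real.log (r t)) 0 ≤ ∑ _t : Fin T, m :=
      Finset.sum_le_sum fun t _ => max_le ((abs_le.1 (hUlog r hrU t)).2) (le_of_lt hm0)
    have hTpos : (0 : ℝ) < (T : ℝ) := by exact_mod_cast hT
    calc logsp r ≤ (1 / (T : ℝ)) * ((T : ℝ) * m) := by
          simp only [logsp]
          apply mul_le_mul_of_nonneg_left _ (by positivity)
          simpa using this
      _ = m := by field_simp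
  have hUsm : ∀ r ∈ U, logsm r ≤ m := by
    intro r hrU
    have : ∑ t, max (-Real.log (r t)) 0 ≤ ∑ _t : Fin T, m :=
      Finset.sum_le_sum fun t _ => max_le (by
        have := (abs_le.1 (hUlog r hrU t)).1; linarith) (le_of_lt hm0)
    have hTpos : (0 : ℝ) < (T : ℝ) := by exact_mod_cast hT
    calc logsm r ≤ (1 / (T : ℝ)) * ((T : ℝ) * m) := by
          simp only [logsm]
          apply mul_le_mul_of_nonneg_left _ (by positivity)
          simpa using this
      _ = m := by field_simp
  have hslogmem : ∀ r ∈ U, ∀ x : ℝ, 0 ≤ slog r x ∧ slog r x ≤ m := by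
    intro r hrU x
    simp only [slog]
    split
    · exact ⟨hlsp0 r, hUsp r hrU⟩
    · exact ⟨hlsm0 r, hUsm r hrU⟩
  have hUu : ∀ r ∈ U, ∀ i, |u r i| ≤ ε := by
    intro r hrU i
    have hs := hslogmem r hrU (l r i)
    have habs : l r i * Real.log (r i) = |Real.log (r i)| := by
      simp only [l]
      split
      · rw [one_mul, abs_of_nonneg ‹_›]
      · rw [neg_one_mul, abs_of_neg (lt_of_not_ge ‹_›)]
    have hlog := hUlog r hrU i
    rw [abs_le]
    constructor
    · have : 0 ≤ l r i * Real.log (r i) := habs ▸ abs_nonneg _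
      simp only [u]; linarith
    · have : l r i * Real.log (r i) ≤ m := habs ▸ hlog
      simp only [u]; linarith
  have hUv : ∀ r ∈ U, ∀ i, |v r i| ≤ ε := by
    intro r hrU i
    have hs := hslogmem r hrU (-(l r i))
    simp only [v, abs_le]
    constructor <;> linarith
  have hUid : ∀ r ∈ U, G r = r := by
    intro r hrU
    funext i
    exact key r (hUpos r hrU) (hUu r hrU) (hUv r hrU)
      (le_trans (hUsp r hrU) hmCp) (le_trans (hUsm r hrU) hmCm) i
  refine ⟨⟨U, hUopen, h1U, hUpos, hUid⟩, hUid _ h1U, ?_⟩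
  have heq : G =ᶠ[nhds (fun _ => (1 : ℝ))] id :=
    Filter.eventuallyEq_of_mem (hUopen.mem_nhds h1U) (fun r hr => hUid r hr)
  exact (hasFDerivAt_id _).congr_of_eventuallyEq heq
end

section
/- Assume r ∈ (0,∞)^T is a generic point in the sense that for every token i: log r_i ≠ 0, |u_i| ≠ ε, |v_i| ≠ ε, and log s⁺ ∉ {C⁺, (1+1/T)·C⁺} and log s⁻ ∉ {C⁻, (1+1/T)·C⁻}. Define γ^{(l)} := 1 if log s^{(l)} < C^{(l)}; γ^{(l)} := −T if C^{(l)} < log s^{(l)} < (1+1/T)·C^{(l)}; and γ^{(l)} := 0 if log s^{(l)} > (1+1/T)·C^{(l)}. Then all partial derivatives of 𝒢 exist at r, and for all tokens i, j: ∂𝒢(r)_i/∂r_j = (𝒢(r)_i / r_j) · [ 1{|u_i| < ε}·1{i = j} + (1/T)·( γ^{(l_j)} − 1{|u_i| < ε}·1{l_i = l_j} − 1{|v_i| < ε}·1{l_i ≠ l_j} ) ], where 1{·} denotes the indicator. -/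
open Filter Topology

private lemma locAffine_hasDerivAt {f : ℝ → ℝ} {x a b : ℝ} (hx : 0 < x)
    (h : f =ᶠ[𝓝 x] fun t => a + b * Real.log t) :
    HasDerivAt f (b / x) x := by
  have h1 : HasDerivAt (fun t => a + b * Real.log t) (b / x) x := by
    have h2 := (Real.hasDerivAt_log hx.ne').const_mul b
    have h3 := h2.const_add a
    simpa [div_eq_mul_inv] using h3
  exact h1.congr_of_eventuallyEq h

private lemma affine_continuousAt {x : ℝ} (hx : x ≠ 0) (a b : ℝ) :
    ContinuousAt (fun t => a + b * Real.log t) x :=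
  continuousAt_const.add (continuousAt_const.mul (Real.continuousAt_log hx))

private lemma sum_update_aux {T : ℕ} (r : Fin T → ℝ) (j : Fin T) (g : ℝ → ℝ) (t : ℝ) :
    ∑ k, g (Function.update r j t k) = g t - g (r j) + ∑ k, g (r k) := by
  have h1 : ∀ k, g (Function.update r j t k) = Function.update (fun k => g (r k)) j (g t) k := by
    intro k
    rcases eq_or_ne k j with rfl | hk
    · simp
    · simp [Function.update_apply, hk]
  rw [Finset.sum_congr rfl (fun k _ => h1 k), Finset.sum_update_of_mem (Finset.mem_univ j),
    Finset.sum_eq_sum_sdiff_singleton_add (Finset.mem_univ j) (fun k => g (r k))]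
  ring

private lemma gagg_eventually (C κ : ℝ) (hC : 0 < C) (hκ : 0 < κ)
    {x y : ℝ} (A : ℝ → ℝ) (hA : ContinuousAt A x) (hAx : A x = y)
    (h0 : 0 ≤ y) (h1 : y ≠ C) (h2 : y ≠ (1 + 1 / κ) * C) :
    ∃ γ δ : ℝ,
      ((fun t => if |A t| ≤ C then A t
          else if |A t| < (1 + 1 / κ) * C then Real.sign (A t) * (κ + 1) * C - κ * A t else 0)
        =ᶠ[𝓝 x] fun t => δ + γ * A t) ∧
      γ = (if y < C then (1:ℝ) else if y < (1 + 1 / κ) * C then -κ else 0) := by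
  have hCC : C < (1 + 1 / κ) * C := by
    have h3 : 0 < C / κ := div_pos hC hκ
    have h4 : (1 + 1 / κ) * C = C + C / κ := by field_simp
    linarith
  have habs : |A x| = y := by rw [hAx, abs_of_nonneg h0]
  rcases lt_or_gt_of_ne h1 with hlt | hgt
  · refine ⟨1, 0, ?_, by rw [if_pos hlt]⟩
    have hev : ∀ᶠ t in 𝓝 x, |A t| < C := by
      have hlt' : |A x| < C := by rwa [habs]
      exact hA.abs.tendsto.eventually (eventually_lt_nhds hlt')
    filter_upwards [hev] with t ht
    rw [if_pos ht.le]; ring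
  · rcases lt_or_gt_of_ne h2 with hlt2 | hgt2
    · refine ⟨-κ, (κ + 1) * C, ?_, by rw [if_neg (not_lt.mpr hgt.le), if_pos hlt2]⟩
      have he1 : ∀ᶠ t in 𝓝 x, C < A t := by
        have : C < A x := by rwa [hAx]
        exact hA.tendsto.eventually (eventually_gt_nhds this)
      have he2 : ∀ᶠ t in 𝓝 x, |A t| < (1 + 1 / κ) * C := by
        have : |A x| < (1 + 1 / κ) * C := by rwa [habs]
        exact hA.abs.tendsto.eventually (eventually_lt_nhds this)
      filter_upwards [he1, he2] with t ht1 ht2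
      have h3 : C < |A t| := lt_of_lt_of_le ht1 (le_abs_self _)
      rw [if_neg (not_le.mpr h3), if_pos ht2, Real.sign_of_pos (hC.trans ht1)]
      ring
    · refine ⟨0, 0, ?_, by rw [if_neg (not_lt.mpr hgt.le), if_neg (not_lt.mpr hgt2.le)]⟩
      have he : ∀ᶠ t in 𝓝 x, (1 + 1 / κ) * C < A t := by
        have : (1 + 1 / κ) * C < A x := by rwa [hAx]
        exact hA.tendsto.eventually (eventually_gt_nhds this)
      filter_upwards [he] with t ht
      have h3 : C < A t := hCC.trans ht
      have h4 : (1 + 1 / κ) * C ≤ |A t| := le_trans ht.le (le_abs_self _)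
      rw [if_neg (not_le.mpr (lt_of_lt_of_le h3 (le_abs_self _))), if_neg (not_lt.mpr h4)]
      ring

private lemma clip_eventually (ε : ℝ) (hε : 0 < ε) {x y : ℝ} (A : ℝ → ℝ)
    (hA : ContinuousAt A x) (hAx : A x = y) (h : |y| ≠ ε) :
    ∃ γ δ : ℝ,
      ((fun t => max (-ε) (min (A t) ε)) =ᶠ[𝓝 x] fun t => δ + γ * A t) ∧
      γ = (if |y| < ε then (1:ℝ) else 0) := by
  have habs : |A x| = |y| := by rw [hAx]
  rcases lt_or_gt_of_ne h with hlt | hgt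
  · refine ⟨1, 0, ?_, by rw [if_pos hlt]⟩
    have hev : ∀ᶠ t in 𝓝 x, |A t| < ε := by
      have : |A x| < ε := by rwa [habs]
      exact hA.abs.tendsto.eventually (eventually_lt_nhds this)
    filter_upwards [hev] with t ht
    rw [min_eq_left (abs_lt.mp ht).2.le, max_eq_right (abs_lt.mp ht).1.le]
    ring
  · rcases le_or_gt 0 y with hpos | hneg
    · have hAx' : ε < A x := by rw [hAx]; rwa [abs_of_nonneg hpos] at hgt
      refine ⟨0, ε, ?_, by rw [if_neg (not_lt.mpr hgt.le)]⟩
      have hev : ∀ᶠ t in 𝓝 x, ε < A t := hA.tendsto.eventually (eventually_gt_nhds hAx')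
      filter_upwards [hev] with t ht
      rw [min_eq_right ht.le, max_eq_right (by linarith : -ε ≤ ε)]
      ring
    · have hAx' : A x < -ε := by
        rw [hAx]; rw [abs_of_neg hneg] at hgt; linarith
      refine ⟨0, -ε, ?_, by rw [if_neg (not_lt.mpr hgt.le)]⟩
      have hev : ∀ᶠ t in 𝓝 x, A t < -ε := hA.tendsto.eventually (eventually_lt_nhds hAx')
      filter_upwards [hev] with t ht
      rw [min_eq_left (by linarith : A t ≤ ε), max_eq_left (by linarith : A t ≤ -ε)]
      ring

/-- at a generic point r, all partial derivatives of the
FiberPO ratio gating map 𝒢 exist and satisfy the closed-form Jacobian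
formula
∂𝒢(r)_i/∂r_j = (𝒢(r)_i/r_j)·[1{|u_i|<ε}1{i=j}
  + (1/T)(γ^{(l_j)} − 1{|u_i|<ε}1{l_i=l_j} − 1{|v_i|<ε}1{l_i≠l_j})]. -/
theorem stmt_16 (T : ℕ) (hT : 1 ≤ T) (ε Cp Cm : ℝ)
    (hε : 0 < ε) (hCp : 0 < Cp) (hCm : 0 < Cm)
    (r : Fin T → ℝ) (hr : ∀ t, 0 < r t) :
    let clip : ℝ → ℝ := fun x => max (-ε) (min x ε)
    let gagg : ℝ → ℝ → ℝ → ℝ := fun y C κ =>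
      if |y| ≤ C then y
      else if |y| < (1 + 1 / κ) * C then Real.sign y * (κ + 1) * C - κ * y
      else 0
    let logsp : (Fin T → ℝ) → ℝ := fun ρ => (1 / (T : ℝ)) * ∑ t, max (Real.log (ρ t)) 0
    let logsm : (Fin T → ℝ) → ℝ := fun ρ => (1 / (T : ℝ)) * ∑ t, max (-Real.log (ρ t)) 0
    let l : (Fin T → ℝ) → Fin T → ℝ := fun ρ i => if 0 ≤ Real.log (ρ i) then 1 else -1
    let slog : (Fin T → ℝ) → ℝ → ℝ := fun ρ x => if x = 1 then logsp ρ else logsm ρ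
    let u : (Fin T → ℝ) → Fin T → ℝ := fun ρ i => l ρ i * Real.log (ρ i) - slog ρ (l ρ i)
    let v : (Fin T → ℝ) → Fin T → ℝ := fun ρ i => -slog ρ (-(l ρ i))
    let G : (Fin T → ℝ) → Fin T → ℝ := fun ρ i =>
      Real.exp (gagg (logsp ρ) Cp (T : ℝ) - gagg (logsm ρ) Cm (T : ℝ)
        + clip (l ρ i * u ρ i) - clip (l ρ i * v ρ i))
    let Cl : ℝ → ℝ := fun x => if x = 1 then Cp else Cm
    let γl : ℝ → ℝ := fun x =>
      if slog r x < Cl x then 1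
      else if slog r x < (1 + 1 / (T : ℝ)) * Cl x then -(T : ℝ)
      else 0
    (∀ i, Real.log (r i) ≠ 0) →
    (∀ i, |u r i| ≠ ε) →
    (∀ i, |v r i| ≠ ε) →
    logsp r ≠ Cp → logsp r ≠ (1 + 1 / (T : ℝ)) * Cp →
    logsm r ≠ Cm → logsm r ≠ (1 + 1 / (T : ℝ)) * Cm →
    ∀ i j : Fin T,
      HasDerivAt (fun t => G (Function.update r j t) i)
        ((G r i / r j) *
          ((if |u r i| < ε then (if i = j then (1 : ℝ) else 0) else 0) +
            (1 / (T : ℝ)) * (γl (l r j)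
              - (if |u r i| < ε then (if l r i = l r j then (1 : ℝ) else 0) else 0)
              - (if |v r i| < ε then (if l r i = l r j then (0 : ℝ) else 1) else 0))))
        (r j) := by
  intro clip gagg logsp logsm l slog u v G Cl γl
  intro hlog hu hv hp1 hp2 hm1 hm2 i j
  have hT0 : (0:ℝ) < (T:ℝ) := by
    have : 0 < T := hT
    exact_mod_cast this
  have hx : 0 < r j := hr j
  have hxne : r j ≠ 0 := ne_of_gt hx
  have hlogc : ContinuousAt Real.log (r j) := Real.continuousAt_log hxne
  -- slopes
  set bp : ℝ := if 0 ≤ Real.log (r j) then 1 / (T:ℝ) else 0 with hbp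
  set bm : ℝ := if 0 ≤ Real.log (r j) then 0 else -(1 / (T:ℝ)) with hbm
  set su : ℝ := (if i = j then (1:ℝ) else 0) - (if 0 ≤ Real.log (r i) then bp else -bm) with hsu
  set sv : ℝ := (if 0 ≤ Real.log (r i) then -bm else bp) with hsv
  -- decomposition of logsp / logsm along the update
  have hLp : ∀ t, logsp (Function.update r j t)
      = logsp r + 1 / (T:ℝ) * (max (Real.log t) 0 - max (Real.log (r j)) 0) := by
    intro t
    have := sum_update_aux r j (fun z => max (Real.log z) 0) t
    unfold logsp
    beta_reduce
    rw [this]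
    ring
  have hLm : ∀ t, logsm (Function.update r j t)
      = logsm r + 1 / (T:ℝ) * (max (-Real.log t) 0 - max (-Real.log (r j)) 0) := by
    intro t
    have := sum_update_aux r j (fun z => max (-Real.log z) 0) t
    unfold logsm
    beta_reduce
    rw [this]
    ring
  -- eventual affine form of logsp/logsm along the update
  have hAp : (fun t => logsp (Function.update r j t)) =ᶠ[𝓝 (r j)]
      fun t => (logsp r - bp * Real.log (r j)) + bp * Real.log t := by
    rcases (hlog j).lt_or_gt with hneg | hpos
    · filter_upwards [hlogc.tendsto.eventually (eventually_lt_nhds hneg)] with t ht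
      rw [hLp t, max_eq_right ht.le, max_eq_right hneg.le, hbp, if_neg (not_le.mpr hneg)]
      ring
    · filter_upwards [hlogc.tendsto.eventually (eventually_gt_nhds hpos)] with t ht
      rw [hLp t, max_eq_left ht.le, max_eq_left hpos.le, hbp, if_pos hpos.le]
      ring
  have hAm : (fun t => logsm (Function.update r j t)) =ᶠ[𝓝 (r j)]
      fun t => (logsm r - bm * Real.log (r j)) + bm * Real.log t := by
    rcases (hlog j).lt_or_gt with hneg | hpos
    · filter_upwards [hlogc.tendsto.eventually (eventually_lt_nhds hneg)] with t ht
      rw [hLm t, max_eq_left (by linarith : (0:ℝ) ≤ -Real.log t),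
        max_eq_left (by linarith : (0:ℝ) ≤ -Real.log (r j)), hbm, if_neg (not_le.mpr hneg)]
      ring
    · filter_upwards [hlogc.tendsto.eventually (eventually_gt_nhds hpos)] with t ht
      rw [hLm t, max_eq_right (by linarith : -Real.log t ≤ 0),
        max_eq_right (by linarith : -Real.log (r j) ≤ 0), hbm, if_pos hpos.le]
      ring
  have hlogsp_nonneg : 0 ≤ logsp r := by
    unfold logsp
    apply mul_nonneg (by positivity)
    exact Finset.sum_nonneg fun k _ => le_max_right _ _
  have hlogsm_nonneg : 0 ≤ logsm r := by
    unfold logsm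
    apply mul_nonneg (by positivity)
    exact Finset.sum_nonneg fun k _ => le_max_right _ _
  -- gagg pieces
  obtain ⟨γp, δp, hEp, hγp⟩ := gagg_eventually Cp (T:ℝ) hCp hT0
    (fun t => (logsp r - bp * Real.log (r j)) + bp * Real.log t)
    (affine_continuousAt hxne _ _)
    (show (logsp r - bp * Real.log (r j)) + bp * Real.log (r j) = logsp r by ring)
    hlogsp_nonneg hp1 hp2
  obtain ⟨γm, δm, hEm, hγm⟩ := gagg_eventually Cm (T:ℝ) hCm hT0
    (fun t => (logsm r - bm * Real.log (r j)) + bm * Real.log t)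
    (affine_continuousAt hxne _ _)
    (show (logsm r - bm * Real.log (r j)) + bm * Real.log (r j) = logsm r by ring)
    hlogsm_nonneg hm1 hm2
  have Hp : HasDerivAt (fun t => gagg (logsp (Function.update r j t)) Cp (T:ℝ))
      (γp * bp / r j) (r j) := by
    apply locAffine_hasDerivAt (a := δp + γp * (logsp r - bp * Real.log (r j))) hx
    filter_upwards [hAp, hEp] with t h1 h2
    unfold gagg
    rw [h1]
    beta_reduce
    rw [h2]
    ring
  have Hm : HasDerivAt (fun t => gagg (logsm (Function.update r j t)) Cm (T:ℝ))
      (γm * bm / r j) (r j) := by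
    apply locAffine_hasDerivAt (a := δm + γm * (logsm r - bm * Real.log (r j))) hx
    filter_upwards [hAm, hEm] with t h1 h2
    unfold gagg
    rw [h1]
    beta_reduce
    rw [h2]
    ring
  -- eventual sign agreement
  have hsgn : ∀ᶠ t in 𝓝 (r j), (0 ≤ Real.log t ↔ 0 ≤ Real.log (r j)) := by
    rcases (hlog j).lt_or_gt with hneg | hpos
    · filter_upwards [hlogc.tendsto.eventually (eventually_lt_nhds hneg)] with t ht
      constructor <;> intro h <;> linarith
    · filter_upwards [hlogc.tendsto.eventually (eventually_gt_nhds hpos)] with t ht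
      constructor <;> intro h <;> linarith
  -- l is eventually constant along the update
  have hlev : ∀ᶠ t in 𝓝 (r j), l (Function.update r j t) i = l r i := by
    filter_upwards [hsgn] with t h3
    unfold l
    beta_reduce
    rcases eq_or_ne i j with rfl | hij
    · rw [Function.update_self, if_congr h3 rfl rfl]
    · rw [Function.update_of_ne hij]
  -- slog at the sign labels
  have hslogA : ∀ ρ' : Fin T → ℝ, slog ρ' (l r i)
      = if 0 ≤ Real.log (r i) then logsp ρ' else logsm ρ' := by
    intro ρ'
    unfold slog l
    beta_reduce
    by_cases hsi : 0 ≤ Real.log (r i)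
    · rw [if_pos hsi, if_pos hsi, if_pos rfl]
    · rw [if_neg hsi, if_neg hsi, if_neg (by norm_num : ¬((-1:ℝ) = 1))]
  have hslogB : ∀ ρ' : Fin T → ℝ, slog ρ' (-(l r i))
      = if 0 ≤ Real.log (r i) then logsm ρ' else logsp ρ' := by
    intro ρ'
    unfold slog l
    beta_reduce
    by_cases hsi : 0 ≤ Real.log (r i)
    · rw [if_pos hsi, if_pos hsi, if_neg (by norm_num : ¬(-(1:ℝ) = 1))]
    · rw [if_neg hsi, if_neg hsi, if_pos (by norm_num : -(-1:ℝ) = 1)]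
  -- formulas for l·u and l·v
  have hLU : ∀ ρ' : Fin T → ℝ, l ρ' i = l r i →
      l ρ' i * u ρ' i = Real.log (ρ' i)
        - (if 0 ≤ Real.log (r i) then logsp ρ' else -(logsm ρ')) := by
    intro ρ' hl
    unfold u
    beta_reduce
    rw [hl, hslogA ρ']
    unfold l
    beta_reduce
    split_ifs with hsi <;> ring
  have hLV : ∀ ρ' : Fin T → ℝ, l ρ' i = l r i →
      l ρ' i * v ρ' i = (if 0 ≤ Real.log (r i) then -(logsm ρ') else logsp ρ') := by
    intro ρ' hl
    unfold v
    beta_reduce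
    rw [hl, hslogB ρ']
    unfold l
    beta_reduce
    split_ifs with hsi <;> ring
  -- eventual affine form of the clip arguments
  have hAu : (fun t => l (Function.update r j t) i * u (Function.update r j t) i) =ᶠ[𝓝 (r j)]
      fun t => (l r i * u r i - su * Real.log (r j)) + su * Real.log t := by
    have hval : l r i * u r i = Real.log (r i)
        - (if 0 ≤ Real.log (r i) then logsp r else -(logsm r)) := hLU r rfl
    filter_upwards [hAp, hAm, hlev] with t h1 h2 hl
    rw [hLU _ hl, hval, h1, h2, hsu, hbp, hbm]
    rcases eq_or_ne i j with rfl | hij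
    · rw [Function.update_self, if_pos rfl]
      by_cases hsi : 0 ≤ Real.log (r i)
      · rw [if_pos hsi, if_pos hsi, if_pos hsi, if_pos hsi]
        ring
      · rw [if_neg hsi, if_neg hsi, if_neg hsi, if_neg hsi]
        ring
    · rw [Function.update_of_ne hij, if_neg hij]
      by_cases hsi : 0 ≤ Real.log (r i) <;>
        by_cases hsj : 0 ≤ Real.log (r j) <;>
          simp only [if_pos, if_neg, hsi, hsj, if_true, if_false] <;> ring
  have hAv : (fun t => l (Function.update r j t) i * v (Function.update r j t) i) =ᶠ[𝓝 (r j)]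
      fun t => (l r i * v r i - sv * Real.log (r j)) + sv * Real.log t := by
    have hval : l r i * v r i
        = (if 0 ≤ Real.log (r i) then -(logsm r) else logsp r) := hLV r rfl
    filter_upwards [hAp, hAm, hlev] with t h1 h2 hl
    rw [hLV _ hl, hval, h1, h2, hsv, hbp, hbm]
    by_cases hsi : 0 ≤ Real.log (r i) <;>
      by_cases hsj : 0 ≤ Real.log (r j) <;>
        simp only [hsi, hsj, if_true, if_false] <;> ring
  -- clip pieces
  have habsl : |l r i| = 1 := by
    unfold l
    beta_reduce
    split_ifs <;> norm_num
  have habs_u : |l r i * u r i| = |u r i| := by rw [abs_mul, habsl, one_mul]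
  have habs_v : |l r i * v r i| = |v r i| := by rw [abs_mul, habsl, one_mul]
  obtain ⟨γu, δu, hEu, hγu⟩ := clip_eventually ε hε
    (fun t => (l r i * u r i - su * Real.log (r j)) + su * Real.log t)
    (affine_continuousAt hxne _ _)
    (show (l r i * u r i - su * Real.log (r j)) + su * Real.log (r j) = l r i * u r i by ring)
    (by rw [habs_u]; exact hu i)
  obtain ⟨γv, δv, hEv, hγv⟩ := clip_eventually ε hε
    (fun t => (l r i * v r i - sv * Real.log (r j)) + sv * Real.log t)
    (affine_continuousAt hxne _ _)
    (show (l r i * v r i - sv * Real.log (r j)) + sv * Real.log (r j) = l r i * v r i by ring)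
    (by rw [habs_v]; exact hv i)
  rw [habs_u] at hγu
  rw [habs_v] at hγv
  have Hu : HasDerivAt
      (fun t => clip (l (Function.update r j t) i * u (Function.update r j t) i))
      (γu * su / r j) (r j) := by
    apply locAffine_hasDerivAt (a := δu + γu * (l r i * u r i - su * Real.log (r j))) hx
    filter_upwards [hAu, hEu] with t h1 h2
    unfold clip
    rw [h1]
    beta_reduce
    rw [h2]
    ring
  have Hv : HasDerivAt
      (fun t => clip (l (Function.update r j t) i * v (Function.update r j t) i))
      (γv * sv / r j) (r j) := by
    apply locAffine_hasDerivAt (a := δv + γv * (l r i * v r i - sv * Real.log (r j))) hx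
    filter_upwards [hAv, hEv] with t h1 h2
    unfold clip
    rw [h1]
    beta_reduce
    rw [h2]
    ring
  -- combine
  have Hexp := (((Hp.sub Hm).add Hu).sub Hv).exp
  simp only [Pi.sub_apply, Pi.add_apply, Function.update_eq_self] at Hexp
  -- characterize γl (l r j)
  have hγlj : γl (l r j) = (if 0 ≤ Real.log (r j) then γp else γm) := by
    by_cases hsj : 0 ≤ Real.log (r j)
    · have h1 : l r j = 1 := by unfold l; beta_reduce; rw [if_pos hsj]
      rw [h1, if_pos hsj, hγp]
      unfold γl slog Cl
      beta_reduce
      norm_num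
    · have h1 : l r j = -1 := by unfold l; beta_reduce; rw [if_neg hsj]
      rw [h1, if_neg hsj, hγm]
      unfold γl slog Cl
      beta_reduce
      norm_num
  have hTne : (T:ℝ) ≠ 0 := ne_of_gt hT0
  have hbr : (if |u r i| < ε then (if i = j then (1 : ℝ) else 0) else 0) +
      (1 / (T : ℝ)) * (γl (l r j)
        - (if |u r i| < ε then (if l r i = l r j then (1 : ℝ) else 0) else 0)
        - (if |v r i| < ε then (if l r i = l r j then (0 : ℝ) else 1) else 0))
      = γp * bp - γm * bm + γu * su - γv * sv := by
    have hli : l r i = (if 0 ≤ Real.log (r i) then (1:ℝ) else -1) := rfl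
    have hlj : l r j = (if 0 ≤ Real.log (r j) then (1:ℝ) else -1) := rfl
    rw [hγu, hγv, hγlj, hsu, hsv, hbp, hbm, hli, hlj]
    by_cases hsi : 0 ≤ Real.log (r i) <;> by_cases hsj : 0 ≤ Real.log (r j) <;>
      simp only [hsi, hsj, if_true, if_false] <;>
        norm_num <;> split_ifs <;> field_simp <;> ring
  have hGr : G r i = Real.exp (gagg (logsp r) Cp (T:ℝ) - gagg (logsm r) Cm (T:ℝ)
      + clip (l r i * u r i) - clip (l r i * v r i)) := rfl
  have hgoal : (G r i / r j) * ((if |u r i| < ε then (if i = j then (1 : ℝ) else 0) else 0) +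
        (1 / (T : ℝ)) * (γl (l r j)
          - (if |u r i| < ε then (if l r i = l r j then (1 : ℝ) else 0) else 0)
          - (if |v r i| < ε then (if l r i = l r j then (0 : ℝ) else 1) else 0)))
      = Real.exp (gagg (logsp r) Cp (T:ℝ) - gagg (logsm r) Cm (T:ℝ)
          + clip (l r i * u r i) - clip (l r i * v r i))
        * (γp * bp / r j - γm * bm / r j + γu * su / r j - γv * sv / r j) := by
    rw [hbr, hGr]
    ring
  rw [hgoal]
  exact Hexp
end

section
/- Three-regime characterization of APC-Obj clipping: let u : X → ℝ with Σ_{a∈X} n_a u_a = 0 and let a ∈ X with u_a ≠ 0. Then exactly one of the following holds: (P) pass-through: D(u) ≤ δ, in which case G(u)_a = u_a; (R) rollback: D(u) > δ and |u_a| > T·(D(u) − δ), in which case G(u)_a has the same sign as u_a and 0 < |G(u)_a| < |u_a|; (Z) zeroed: D(u) > δ and |u_a| ≤ T·(D(u) − δ), in which case G(u)_a = 0. -/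
/-- three-regime characterization of APC-Obj clipping: for a
zero-weighted-sum vector u and an entry a with u_a ≠ 0, exactly one of
pass-through (P), rollback (R), zeroed (Z) holds, with the corresponding
behavior of the gated value G(u)_a. -/
theorem stmt_17 {X : Type} [Fintype X] [Nonempty X]
    (n : X → ℕ) (hn : ∀ a, 1 ≤ n a) (δ : ℝ) (hδ : 0 < δ)
    (u : X → ℝ) (hu : ∑ a, (n a : ℝ) * u a = 0) (a : X) (ha : u a ≠ 0) :
    let T : ℝ := ∑ b, (n b : ℝ)
    let clip : ℝ → ℝ → ℝ := fun x B => max (-(max B 0)) (min x (max B 0))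
    let D : (X → ℝ) → ℝ := fun w => (1 / T) * ∑ b, (n b : ℝ) * |w b|
    let G : X → ℝ := fun b => clip (u b) (T * (δ - D u) + |u b|)
    let P : Prop := D u ≤ δ
    let R : Prop := D u > δ ∧ |u a| > T * (D u - δ)
    let Z : Prop := D u > δ ∧ |u a| ≤ T * (D u - δ)
    ((P ∧ ¬R ∧ ¬Z) ∨ (¬P ∧ R ∧ ¬Z) ∨ (¬P ∧ ¬R ∧ Z)) ∧
    (P → G a = u a) ∧
    (R → Real.sign (G a) = Real.sign (u a) ∧ 0 < |G a| ∧ |G a| < |u a|) ∧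
    (Z → G a = 0) := by
  intro T clip D G P R Z
  have hT : 0 < T := by
    apply Finset.sum_pos
    · intro b _
      exact_mod_cast Nat.lt_of_lt_of_le Nat.zero_lt_one (hn b)
    · exact Finset.univ_nonempty
  have habs : 0 < |u a| := abs_pos.mpr ha
  set B : ℝ := T * (δ - D u) + |u a| with hBdef
  have hGa : G a = max (-(max B 0)) (min (u a) (max B 0)) := rfl
  refine ⟨?_, ?_, ?_, ?_⟩
  · by_cases hP : D u ≤ δ
    · exact Or.inl ⟨hP, fun hR => absurd hP (not_le.mpr hR.1),
        fun hZ => absurd hP (not_le.mpr hZ.1)⟩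
    · push_neg at hP
      by_cases hR : |u a| > T * (D u - δ)
      · exact Or.inr (Or.inl ⟨not_le.mpr hP, ⟨hP, hR⟩,
          fun hZ => absurd hZ.2 (not_le.mpr hR)⟩)
      · push_neg at hR
        exact Or.inr (Or.inr ⟨not_le.mpr hP, fun h => absurd h.2 (not_lt.mpr hR),
          ⟨hP, hR⟩⟩)
  · intro hP
    have hB : |u a| ≤ B := by
      have : 0 ≤ T * (δ - D u) := mul_nonneg hT.le (by linarith)
      linarith [hBdef]
    have hB0 : 0 < B := lt_of_lt_of_le habs hB
    have hmax : max B 0 = B := max_eq_left hB0.le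
    rw [hGa, hmax]
    have h1 : u a ≤ B := (le_abs_self _).trans hB
    have h2 : -B ≤ u a := by
      have := neg_abs_le (u a); linarith
    rw [min_eq_left h1, max_eq_right h2]
  · rintro ⟨hD, hR⟩
    have hB0 : 0 < B := by
      have : B = |u a| - T * (D u - δ) := by rw [hBdef]; ring
      linarith
    have hBlt : B < |u a| := by
      have h1 : 0 < T * (D u - δ) := mul_pos hT (by linarith)
      have : B = |u a| - T * (D u - δ) := by rw [hBdef]; ring
      linarith
    have hmax : max B 0 = B := max_eq_left hB0.le
    rcases ha.lt_or_gt with hneg | hpos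
    · have hua : |u a| = -(u a) := abs_of_neg hneg
      have hG : G a = -B := by
        rw [hGa, hmax, min_eq_left (by linarith), max_eq_left (by linarith)]
      rw [hG]
      refine ⟨?_, ?_, ?_⟩
      · rw [Real.sign_of_neg (by linarith), Real.sign_of_neg hneg]
      · rw [abs_neg, abs_of_pos hB0]; exact hB0
      · rw [abs_neg, abs_of_pos hB0]; exact hBlt
    · have hua : |u a| = u a := abs_of_pos hpos
      have hG : G a = B := by
        rw [hGa, hmax, min_eq_right (by linarith), max_eq_right (by linarith)]
      rw [hG]
      refine ⟨?_, ?_, ?_⟩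
      · rw [Real.sign_of_pos hB0, Real.sign_of_pos hpos]
      · rw [abs_of_pos hB0]; exact hB0
      · rw [abs_of_pos hB0]; exact hBlt
  · rintro ⟨hD, hZ⟩
    have hB0 : B ≤ 0 := by
      have : B = |u a| - T * (D u - δ) := by rw [hBdef]; ring
      linarith
    have hmax : max B 0 = 0 := max_eq_right hB0
    rw [hGa, hmax]
    simp [min_le_right (u a) (0:ℝ)]
end

section
/- Global bound and attainment for the surrogated APC-Obj objective: for every δ > 0 and every Δ ∈ C, j^APC(Δ, δ) ≤ δ·M/(1−γ) + K₀, where K₀ := (1/((1−γ)Γ)) Σ_{s∈S} (Γ_s/T_s) Σ_{a∈X_s} n_{s,a} Â_{s,a}. Moreover the bound is attained: if for each s ∈ S the vector Δ̂*_{s,·} ∈ F_s attains M(s), then the vector Δ with Δ_{s,a} := δ·Δ̂*_s(a) belongs to C and satisfies j^APC(Δ, δ) = δ·M/(1−γ) + K₀. -/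
private lemma clip_id' {x B : ℝ} (h : |x| ≤ B) :
    max (-(max B 0)) (min x (max B 0)) = x := by
  have h0 : (0:ℝ) ≤ B := (abs_nonneg x).trans h
  rw [max_eq_left h0, min_eq_left ((le_abs_self x).trans h)]
  exact max_eq_right (by linarith [neg_abs_le x])

private lemma clip_form' {x ρ : ℝ} (hρ : 0 < ρ) :
    max (-(max (|x| - ρ) 0)) (min x (max (|x| - ρ) 0))
      = max (x - ρ) 0 - max (-x - ρ) 0 := by
  rcases le_or_gt 0 x with h | h
  · rw [abs_of_nonneg h]
    have h1 : max (-x - ρ) 0 = 0 := max_eq_right (by linarith)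
    have h2 : min x (max (x - ρ) 0) = max (x - ρ) 0 :=
      min_eq_right (max_le (by linarith) h)
    rw [h1, h2, sub_zero]
    exact max_eq_right (by linarith [le_max_right (x - ρ) (0:ℝ)])
  · rw [abs_of_neg h]
    have h1 : max (x - ρ) 0 = 0 := max_eq_right (by linarith)
    have h2 : min x (max (-x - ρ) 0) = x :=
      min_eq_left (h.le.trans (le_max_right _ _))
    have h3 : max (-x - ρ) 0 ≤ -x := max_le (by linarith) (by linarith)
    rw [h1, h2, zero_sub]
    exact max_eq_left (by linarith)

private lemma maxz (x : ℝ) : max x 0 = (x + |x|) / 2 := by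
  rcases le_or_gt 0 x with h | h
  · rw [max_eq_left h, abs_of_nonneg h]; ring
  · rw [max_eq_right h.le, abs_of_neg h]; ring

private lemma part_bound {ι : Type} [Fintype ι] (n : ι → ℕ) (hn : ∀ a, 1 ≤ n a)
    (Δ : ι → ℝ) (ρ : ℝ) (hρ : 0 < ρ) :
    ∑ a, (n a : ℝ) * max (Δ a - ρ) 0
      ≤ max ((∑ a, (n a : ℝ) * max (Δ a) 0) - ρ) 0 := by
  classical
  by_cases hall : ∀ a, Δ a ≤ ρ
  · have h0 : ∀ a ∈ Finset.univ, (n a : ℝ) * max (Δ a - ρ) 0 = 0 := by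
      intro a _; rw [max_eq_right (by linarith [hall a])]; ring
    rw [Finset.sum_eq_zero h0]
    exact le_max_right _ _
  · push_neg at hall
    obtain ⟨a₀, ha₀⟩ := hall
    refine le_max_of_le_left ?_
    have key : ∀ a ∈ Finset.univ.erase a₀,
        (n a : ℝ) * max (Δ a - ρ) 0 ≤ (n a : ℝ) * max (Δ a) 0 := by
      intro a _
      exact mul_le_mul_of_nonneg_left (max_le_max (by linarith) le_rfl) (by positivity)
    have hn0 : (1:ℝ) ≤ (n a₀ : ℝ) := by exact_mod_cast hn a₀
    have h0 : (n a₀ : ℝ) * max (Δ a₀ - ρ) 0 ≤ (n a₀ : ℝ) * max (Δ a₀) 0 - ρ := by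
      rw [max_eq_left (by linarith), max_eq_left (by linarith)]
      nlinarith
    calc ∑ a, (n a : ℝ) * max (Δ a - ρ) 0
        = (n a₀ : ℝ) * max (Δ a₀ - ρ) 0
            + ∑ a ∈ Finset.univ.erase a₀, (n a : ℝ) * max (Δ a - ρ) 0 :=
          (Finset.add_sum_erase _ _ (Finset.mem_univ a₀)).symm
      _ ≤ ((n a₀ : ℝ) * max (Δ a₀) 0 - ρ)
            + ∑ a ∈ Finset.univ.erase a₀, (n a : ℝ) * max (Δ a) 0 :=
          add_le_add h0 (Finset.sum_le_sum key)
      _ = (∑ a, (n a : ℝ) * max (Δ a) 0) - ρ := by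
          rw [← Finset.add_sum_erase _ (fun a => (n a : ℝ) * max (Δ a) 0)
            (Finset.mem_univ a₀)]
          ring

private lemma sum_pos_part {ι : Type} [Fintype ι] (n : ι → ℕ) (Δ : ι → ℝ)
    (hz : ∑ a, (n a : ℝ) * Δ a = 0) :
    ∑ a, (n a : ℝ) * max (Δ a) 0 = (∑ a, (n a : ℝ) * |Δ a|) / 2 := by
  have h0 : ∀ a ∈ Finset.univ,
      (n a : ℝ) * max (Δ a) 0 = ((n a : ℝ) * Δ a + (n a : ℝ) * |Δ a|) / 2 := by
    intro a _; rw [maxz]; ring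
  rw [Finset.sum_congr rfl h0, ← Finset.sum_div, Finset.sum_add_distrib, hz, zero_add]

private lemma tv_key {ι : Type} [Fintype ι] [Nonempty ι] (n : ι → ℕ) (hn : ∀ a, 1 ≤ n a)
    (Δ : ι → ℝ) (hz : ∑ a, (n a : ℝ) * Δ a = 0) (δ : ℝ) (hδ : 0 < δ)
    (T Dh : ℝ) (hT : T = ∑ a, (n a : ℝ))
    (hDh : Dh = (1 / T) * ∑ a, (n a : ℝ) * |Δ a|)
    (c : ι → ℝ)
    (hc : ∀ a, c a = max (-(max (T * (δ - Dh) + |Δ a|) 0))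
        (min (Δ a) (max (T * (δ - Dh) + |Δ a|) 0)))
    (Cm : ℝ) (hCm : Cm = (1 / T) * ∑ a, (n a : ℝ) * c a) :
    (∑ a, (n a : ℝ) * (c a - Cm) = 0) ∧ ∑ a, (n a : ℝ) * |c a - Cm| ≤ T * δ := by
  have hTpos : 0 < T := by
    rw [hT]
    exact Finset.sum_pos
      (fun a _ => by exact_mod_cast Nat.lt_of_lt_of_le Nat.zero_lt_one (hn a))
      Finset.univ_nonempty
  have hTne : T ≠ 0 := ne_of_gt hTpos
  have hsum : ∑ a, (n a : ℝ) * c a = T * Cm := by rw [hCm]; field_simp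
  have hzero : ∑ a, (n a : ℝ) * (c a - Cm) = 0 := by
    have e1 : ∀ a ∈ Finset.univ,
        (n a : ℝ) * (c a - Cm) = (n a : ℝ) * c a - (n a : ℝ) * Cm := fun a _ => by ring
    rw [Finset.sum_congr rfl e1, Finset.sum_sub_distrib, ← Finset.sum_mul, ← hT, hsum]
    ring
  refine ⟨hzero, ?_⟩
  have hDsum : ∑ a, (n a : ℝ) * |Δ a| = T * Dh := by rw [hDh]; field_simp
  rcases le_or_gt Dh δ with hcase | hcase
  · -- no clipping
    have hceq : ∀ a, c a = Δ a := by
      intro a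
      rw [hc a]
      exact clip_id' (by nlinarith [abs_nonneg (Δ a)])
    have hCm0 : Cm = 0 := by
      rw [hCm, Finset.sum_congr rfl (fun a _ => by rw [hceq a]), hz, mul_zero]
    calc ∑ a, (n a : ℝ) * |c a - Cm| = ∑ a, (n a : ℝ) * |Δ a| := by
          refine Finset.sum_congr rfl fun a _ => ?_
          rw [hceq a, hCm0, sub_zero]
      _ = T * Dh := hDsum
      _ ≤ T * δ := by nlinarith
  · -- clipping
    set ρ : ℝ := T * (Dh - δ) with hρdef
    have hρ : 0 < ρ := mul_pos hTpos (by linarith)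
    have hceq : ∀ a, c a = max (Δ a - ρ) 0 - max (-Δ a - ρ) 0 := by
      intro a
      rw [hc a, show T * (δ - Dh) + |Δ a| = |Δ a| - ρ by rw [hρdef]; ring]
      exact clip_form' hρ
    set P := ∑ a, (n a : ℝ) * max (Δ a - ρ) 0 with hPdef
    set Q := ∑ a, (n a : ℝ) * max (-Δ a - ρ) 0 with hQdef
    have hPQ : ∑ a, (n a : ℝ) * c a = P - Q := by
      rw [hPdef, hQdef, ← Finset.sum_sub_distrib]
      exact Finset.sum_congr rfl fun a _ => by rw [hceq a]; ring
    have hSp : ∑ a, (n a : ℝ) * max (Δ a) 0 = T * Dh / 2 := by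
      rw [sum_pos_part n Δ hz, hDsum]
    have hz' : ∑ a, (n a : ℝ) * (-Δ a) = 0 := by
      simp only [mul_neg]
      rw [Finset.sum_neg_distrib, hz, neg_zero]
    have hSm : ∑ a, (n a : ℝ) * max (-Δ a) 0 = T * Dh / 2 := by
      rw [sum_pos_part n (fun a => -Δ a) hz']
      simp only [abs_neg]
      rw [hDsum]
    have hhalf : max (T * Dh / 2 - ρ) 0 ≤ T * δ / 2 := by
      apply max_le _ (by positivity)
      rw [hρdef]
      nlinarith
    have hPle : P ≤ T * δ / 2 := by
      have := part_bound n hn Δ ρ hρ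
      rw [hSp] at this
      exact this.trans hhalf
    have hQle : Q ≤ T * δ / 2 := by
      have := part_bound n hn (fun a => -Δ a) ρ hρ
      rw [hSm] at this
      exact this.trans hhalf
    have hCmTP : T * Cm = P - Q := by rw [← hsum, hPQ]
    have tri : ∀ x y : ℝ, |x - y| ≤ |x| + |y| := fun x y => by
      rw [sub_eq_add_neg]
      exact (abs_add_le x (-y)).trans (by rw [abs_neg])
    have habs : ∀ a, |c a - Cm| ≤ max (Δ a - ρ) 0 + max (-Δ a - ρ) 0 + |Cm| := by
      intro a
      have hp : (0:ℝ) ≤ max (Δ a - ρ) 0 := le_max_right _ _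
      have hq : (0:ℝ) ≤ max (-Δ a - ρ) 0 := le_max_right _ _
      have h1 : |c a| ≤ max (Δ a - ρ) 0 + max (-Δ a - ρ) 0 := by
        rw [hceq a]
        exact (tri _ _).trans (by rw [abs_of_nonneg hp, abs_of_nonneg hq])
      have := tri (c a) Cm
      linarith
    have hmain : ∑ a, (n a : ℝ) * |c a - Cm| ≤ P + Q + T * |Cm| := by
      calc ∑ a, (n a : ℝ) * |c a - Cm|
          ≤ ∑ a, (n a : ℝ) * (max (Δ a - ρ) 0 + max (-Δ a - ρ) 0 + |Cm|) :=
            Finset.sum_le_sum fun a _ =>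
              mul_le_mul_of_nonneg_left (habs a) (by positivity)
        _ = P + Q + T * |Cm| := by
            rw [hPdef, hQdef, hT, Finset.sum_mul, ← Finset.sum_add_distrib,
              ← Finset.sum_add_distrib]
            exact Finset.sum_congr rfl fun a _ => by ring
    have hTCm : T * |Cm| = |P - Q| := by
      rw [← hCmTP, abs_mul, abs_of_pos hTpos]
    rcases abs_cases (P - Q) with ⟨h1, _⟩ | ⟨h1, _⟩ <;>
      (rw [hTCm, h1] at hmain; linarith)

private lemma scale_le {ι : Type} [Fintype ι] [Nonempty ι] (n : ι → ℕ) (hn : ∀ a, 1 ≤ n a)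
    (A : ι → ℝ) (Mv : ℝ)
    (hM : IsGreatest {y : ℝ | ∃ Δ : ι → ℝ,
        (1 / (∑ a, (n a : ℝ))) * (∑ a, (n a : ℝ) * |Δ a|) = 1 ∧
        (∑ a, (n a : ℝ) * Δ a) = 0 ∧
        y = ∑ a, (n a : ℝ) * Δ a * A a} Mv)
    (δ : ℝ) (hδ : 0 < δ) (v : ι → ℝ)
    (hzv : ∑ a, (n a : ℝ) * v a = 0)
    (htv : ∑ a, (n a : ℝ) * |v a| ≤ (∑ a, (n a : ℝ)) * δ) :
    ∑ a, (n a : ℝ) * v a * A a ≤ δ * Mv := by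
  have hTpos : 0 < ∑ a, (n a : ℝ) :=
    Finset.sum_pos
      (fun a _ => by exact_mod_cast Nat.lt_of_lt_of_le Nat.zero_lt_one (hn a))
      Finset.univ_nonempty
  have hTne : (∑ a, (n a : ℝ)) ≠ 0 := ne_of_gt hTpos
  have hMnn : 0 ≤ Mv := by
    obtain ⟨Δ₀, hf1, hf2, hf3⟩ := hM.1
    have hneg : -Mv ∈ {y : ℝ | ∃ Δ : ι → ℝ,
        (1 / (∑ a, (n a : ℝ))) * (∑ a, (n a : ℝ) * |Δ a|) = 1 ∧
        (∑ a, (n a : ℝ) * Δ a) = 0 ∧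
        y = ∑ a, (n a : ℝ) * Δ a * A a} := by
      refine ⟨fun a => -Δ₀ a, by simpa [abs_neg] using hf1, ?_, ?_⟩
      · simp only [mul_neg]
        rw [Finset.sum_neg_distrib, hf2, neg_zero]
      · rw [hf3, ← Finset.sum_neg_distrib]
        exact Finset.sum_congr rfl fun a _ => by ring
    have := hM.2 hneg
    linarith
  have hSnn : 0 ≤ ∑ a, (n a : ℝ) * |v a| :=
    Finset.sum_nonneg fun a _ => mul_nonneg (by positivity) (abs_nonneg _)
  set τ := (1 / (∑ a, (n a : ℝ))) * ∑ a, (n a : ℝ) * |v a| with hτ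
  have hτnn : 0 ≤ τ := mul_nonneg (by positivity) hSnn
  have hτδ : τ ≤ δ := by
    rw [hτ]
    rw [show δ = (1 / (∑ a, (n a : ℝ))) * ((∑ a, (n a : ℝ)) * δ) by field_simp]
    exact mul_le_mul_of_nonneg_left htv (by positivity)
  rcases eq_or_lt_of_le hτnn with h0 | hpos
  · have hsum0 : ∑ a, (n a : ℝ) * |v a| = 0 := by
      have h0' := h0.symm
      rw [hτ, mul_eq_zero] at h0'
      rcases h0' with h | h
      · exact absurd h (by positivity)
      · exact h
    have hva : ∀ a, v a = 0 := by
      intro a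
      have hterm := (Finset.sum_eq_zero_iff_of_nonneg
        (fun a _ => mul_nonneg (n a).cast_nonneg (abs_nonneg (v a)))).mp hsum0 a
        (Finset.mem_univ a)
      have hne : (n a : ℝ) ≠ 0 := by
        have := hn a; positivity
      rcases mul_eq_zero.mp hterm with h | h
      · exact absurd h hne
      · exact abs_eq_zero.mp h
    rw [Finset.sum_eq_zero (fun a _ => by rw [hva a]; ring)]
    positivity
  · have hτne : τ ≠ 0 := ne_of_gt hpos
    have hS : ∑ a, (n a : ℝ) * |v a| = (∑ a, (n a : ℝ)) * τ := by
      rw [hτ]; field_simp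
    have hmem : (∑ a, (n a : ℝ) * (v a / τ) * A a) ∈ {y : ℝ | ∃ Δ : ι → ℝ,
        (1 / (∑ a, (n a : ℝ))) * (∑ a, (n a : ℝ) * |Δ a|) = 1 ∧
        (∑ a, (n a : ℝ) * Δ a) = 0 ∧
        y = ∑ a, (n a : ℝ) * Δ a * A a} := by
      refine ⟨fun a => v a / τ, ?_, ?_, rfl⟩
      · have e1 : ∀ a ∈ Finset.univ,
            (n a : ℝ) * |v a / τ| = ((n a : ℝ) * |v a|) / τ := by
          intro a _
          rw [abs_div, abs_of_pos hpos]
          ring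
        rw [Finset.sum_congr rfl e1, ← Finset.sum_div, hS]
        field_simp
      · have e1 : ∀ a ∈ Finset.univ,
            (n a : ℝ) * (v a / τ) = ((n a : ℝ) * v a) / τ := fun a _ => by ring
        rw [Finset.sum_congr rfl e1, ← Finset.sum_div, hzv, zero_div]
    have hle := hM.2 hmem
    have hrw : ∑ a, (n a : ℝ) * v a * A a
        = τ * ∑ a, (n a : ℝ) * (v a / τ) * A a := by
      rw [Finset.mul_sum]
      exact Finset.sum_congr rfl fun a _ => by field_simp
    rw [hrw]
    calc τ * ∑ a, (n a : ℝ) * (v a / τ) * A a ≤ τ * Mv :=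
          mul_le_mul_of_nonneg_left hle hτnn
      _ ≤ δ * Mv := mul_le_mul_of_nonneg_right hτδ hMnn

private lemma state_ineq {ι : Type} [Fintype ι] [Nonempty ι] (n : ι → ℕ) (hn : ∀ a, 1 ≤ n a)
    (A : ι → ℝ) (Mv : ℝ)
    (hM : IsGreatest {y : ℝ | ∃ Δ : ι → ℝ,
        (1 / (∑ a, (n a : ℝ))) * (∑ a, (n a : ℝ) * |Δ a|) = 1 ∧
        (∑ a, (n a : ℝ) * Δ a) = 0 ∧
        y = ∑ a, (n a : ℝ) * Δ a * A a} Mv)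
    (δ : ℝ) (hδ : 0 < δ) (Δ : ι → ℝ) (hz : ∑ a, (n a : ℝ) * Δ a = 0)
    (T Dh Cm : ℝ) (c : ι → ℝ)
    (hT : T = ∑ a, (n a : ℝ)) (hDh : Dh = (1 / T) * ∑ a, (n a : ℝ) * |Δ a|)
    (hc : ∀ a, c a = max (-(max (T * (δ - Dh) + |Δ a|) 0))
        (min (Δ a) (max (T * (δ - Dh) + |Δ a|) 0)))
    (hCm : Cm = (1 / T) * ∑ a, (n a : ℝ) * c a) :
    ∑ a, (n a : ℝ) * (c a * A a + (1 - Cm) * A a) ≤ δ * Mv + ∑ a, (n a : ℝ) * A a := by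
  obtain ⟨hzero, htv⟩ := tv_key n hn Δ hz δ hδ T Dh hT hDh c hc Cm hCm
  have hexp : ∑ a, (n a : ℝ) * (c a * A a + (1 - Cm) * A a)
      = ∑ a, (n a : ℝ) * (c a - Cm) * A a + ∑ a, (n a : ℝ) * A a := by
    rw [← Finset.sum_add_distrib]
    exact Finset.sum_congr rfl fun a _ => by ring
  rw [hexp]
  have hkey := scale_le n hn A Mv hM δ hδ (fun a => c a - Cm) hzero
    (by rw [← hT]; exact htv)
  linarith

private lemma state_eq {ι : Type} [Fintype ι] [Nonempty ι] (n : ι → ℕ) (hn : ∀ a, 1 ≤ n a)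
    (A : ι → ℝ) (δ : ℝ) (hδ : 0 < δ) (Δh : ι → ℝ) (T Dh Cm : ℝ) (c : ι → ℝ)
    (hT : T = ∑ a, (n a : ℝ))
    (h1 : (1 / T) * ∑ a, (n a : ℝ) * |Δh a| = 1)
    (h2 : ∑ a, (n a : ℝ) * Δh a = 0)
    (hDh : Dh = (1 / T) * ∑ a, (n a : ℝ) * |δ * Δh a|)
    (hc : ∀ a, c a = max (-(max (T * (δ - Dh) + |δ * Δh a|) 0))
        (min (δ * Δh a) (max (T * (δ - Dh) + |δ * Δh a|) 0)))
    (hCm : Cm = (1 / T) * ∑ a, (n a : ℝ) * c a) :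
    ∑ a, (n a : ℝ) * (c a * A a + (1 - Cm) * A a)
      = δ * ∑ a, (n a : ℝ) * Δh a * A a + ∑ a, (n a : ℝ) * A a := by
  have hDδ : Dh = δ := by
    rw [hDh]
    have e1 : ∀ a ∈ Finset.univ,
        (n a : ℝ) * |δ * Δh a| = δ * ((n a : ℝ) * |Δh a|) := by
      intro a _
      rw [abs_mul, abs_of_pos hδ]
      ring
    rw [Finset.sum_congr rfl e1, ← Finset.mul_sum,
      show (1 / T) * (δ * ∑ a, (n a : ℝ) * |Δh a|)
        = δ * ((1 / T) * ∑ a, (n a : ℝ) * |Δh a|) by ring, h1, mul_one]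
  have hceq : ∀ a, c a = δ * Δh a := by
    intro a
    rw [hc a, hDδ]
    exact clip_id' (by simp)
  have hsumc : ∑ a, (n a : ℝ) * c a = 0 := by
    have e1 : ∀ a ∈ Finset.univ,
        (n a : ℝ) * c a = δ * ((n a : ℝ) * Δh a) := fun a _ => by rw [hceq a]; ring
    rw [Finset.sum_congr rfl e1, ← Finset.mul_sum, h2, mul_zero]
  have hCm0 : Cm = 0 := by rw [hCm, hsumc, mul_zero]
  calc ∑ a, (n a : ℝ) * (c a * A a + (1 - Cm) * A a)
      = ∑ a, (δ * ((n a : ℝ) * Δh a * A a) + (n a : ℝ) * A a) :=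
        Finset.sum_congr rfl fun a _ => by rw [hceq a, hCm0]; ring
    _ = δ * ∑ a, (n a : ℝ) * Δh a * A a + ∑ a, (n a : ℝ) * A a := by
        rw [Finset.sum_add_distrib, Finset.mul_sum]

private lemma final_alg {S : Type} [Fintype S] (Γ Ts Ms Ks : S → ℝ) (γ δ Γtot : ℝ)
    (hγ : (1 : ℝ) - γ ≠ 0) (hΓ0 : Γtot ≠ 0) :
    (1 / ((1 - γ) * Γtot)) * ∑ s, (Γ s / Ts s) * (δ * Ms s + Ks s)
      = δ * ((1 / Γtot) * ∑ s, (Γ s / Ts s) * Ms s) / (1 - γ)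
        + (1 / ((1 - γ) * Γtot)) * ∑ s, (Γ s / Ts s) * Ks s := by
  have e1 : ∑ s, (Γ s / Ts s) * (δ * Ms s + Ks s)
      = δ * (∑ s, (Γ s / Ts s) * Ms s) + ∑ s, (Γ s / Ts s) * Ks s := by
    rw [Finset.mul_sum, ← Finset.sum_add_distrib]
    exact Finset.sum_congr rfl fun s _ => by ring
  rw [e1]
  field_simp

/-- global bound and attainment for the surrogated APC-Obj
objective: j^APC(Δ, δ) ≤ δ·M/(1−γ) + K₀ on the zero-sum set C, with equality
attained by scaling per-state maximizers of the unit-TV problem by δ. -/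
theorem stmt_19 {S : Type} [Fintype S] [Nonempty S]
    (X : S → Type) [∀ s, Fintype (X s)]
    (hX : ∀ s, 2 ≤ Fintype.card (X s))
    (n : ∀ s, X s → ℕ) (hn : ∀ s a, 1 ≤ n s a)
    (A : ∀ s, X s → ℝ)
    (Anorm : ℝ) (hA : IsGreatest {x : ℝ | ∃ s, ∃ a : X s, x = |A s a|} Anorm)
    (hApos : 0 < Anorm)
    (Γ : S → ℝ) (hΓ : ∀ s, 0 < Γ s)
    (γ : ℝ) (hγ0 : 0 < γ) (hγ1 : γ < 1)
    (M : S → ℝ)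
    (hM : ∀ s, IsGreatest {y : ℝ | ∃ Δ : X s → ℝ,
        (1 / (∑ a, (n s a : ℝ))) * (∑ a, (n s a : ℝ) * |Δ a|) = 1 ∧
        (∑ a, (n s a : ℝ) * Δ a) = 0 ∧
        y = ∑ a, (n s a : ℝ) * Δ a * A s a} (M s)) :
    let Ts : S → ℝ := fun s => ∑ a, (n s a : ℝ)
    let Γtot : ℝ := ∑ s, Γ s
    let Mtot : ℝ := (1 / Γtot) * ∑ s, (Γ s / Ts s) * M s
    let Dhat : S → (∀ s', X s' → ℝ) → ℝ :=
      fun s Δ => (1 / Ts s) * ∑ a, (n s a : ℝ) * |Δ s a|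
    let C : Set (∀ s, X s → ℝ) := {Δ | ∀ s, ∑ a, (n s a : ℝ) * Δ s a = 0}
    let clip : ℝ → ℝ → ℝ := fun x B => max (-(max B 0)) (min x (max B 0))
    let Cs : S → (∀ s', X s' → ℝ) → ℝ → ℝ := fun s Δ δ =>
      (1 / Ts s) * ∑ a, (n s a : ℝ) * clip (Δ s a) (Ts s * (δ - Dhat s Δ) + |Δ s a|)
    let jAPC : (∀ s, X s → ℝ) → ℝ → ℝ := fun Δ δ =>
      (1 / ((1 - γ) * Γtot)) * ∑ s, (Γ s / Ts s) * ∑ a, (n s a : ℝ) *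
        (clip (Δ s a) (Ts s * (δ - Dhat s Δ) + |Δ s a|) * A s a + (1 - Cs s Δ δ) * A s a)
    let K0 : ℝ := (1 / ((1 - γ) * Γtot)) * ∑ s, (Γ s / Ts s) * ∑ a, (n s a : ℝ) * A s a
    (∀ δ : ℝ, 0 < δ → ∀ Δ ∈ C, jAPC Δ δ ≤ δ * Mtot / (1 - γ) + K0) ∧
    (∀ δ : ℝ, 0 < δ → ∀ Δhat : ∀ s, X s → ℝ,
      (∀ s, ((1 / Ts s) * ∑ a, (n s a : ℝ) * |Δhat s a| = 1) ∧
        (∑ a, (n s a : ℝ) * Δhat s a = 0) ∧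
        (∑ a, (n s a : ℝ) * Δhat s a * A s a = M s)) →
      ((fun s a => δ * Δhat s a) ∈ C ∧
        jAPC (fun s a => δ * Δhat s a) δ = δ * Mtot / (1 - γ) + K0)) := by
  intro Ts Γtot Mtot Dhat C clip Cs jAPC K0
  haveI hne : ∀ s, Nonempty (X s) := fun s =>
    Fintype.card_pos_iff.mp (lt_of_lt_of_le (by norm_num) (hX s))
  have h1γ : (0:ℝ) < 1 - γ := by linarith
  have hΓt : (0:ℝ) < Γtot := Finset.sum_pos (fun s _ => hΓ s) Finset.univ_nonempty
  have hTs : ∀ s, (0:ℝ) < Ts s := fun s =>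
    Finset.sum_pos
      (fun a _ => by exact_mod_cast Nat.lt_of_lt_of_le Nat.zero_lt_one (hn s a))
      Finset.univ_nonempty
  have hco : (0:ℝ) < 1 / ((1 - γ) * Γtot) := by positivity
  constructor
  · intro δ hδ Δ hΔ
    have hz : ∀ s, ∑ a, (n s a : ℝ) * Δ s a = 0 := hΔ
    have hstate : ∀ s, (∑ a, (n s a : ℝ) *
        (clip (Δ s a) (Ts s * (δ - Dhat s Δ) + |Δ s a|) * A s a
          + (1 - Cs s Δ δ) * A s a))
        ≤ δ * M s + ∑ a, (n s a : ℝ) * A s a := fun s =>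
      state_ineq (n s) (hn s) (A s) (M s) (hM s) δ hδ (Δ s) (hz s)
        (Ts s) (Dhat s Δ) (Cs s Δ δ)
        (fun a => clip (Δ s a) (Ts s * (δ - Dhat s Δ) + |Δ s a|))
        rfl rfl (fun a => rfl) rfl
    calc jAPC Δ δ
        = (1 / ((1 - γ) * Γtot)) * ∑ s, (Γ s / Ts s) * (∑ a, (n s a : ℝ) *
            (clip (Δ s a) (Ts s * (δ - Dhat s Δ) + |Δ s a|) * A s a
              + (1 - Cs s Δ δ) * A s a)) := rfl
      _ ≤ (1 / ((1 - γ) * Γtot)) * ∑ s, (Γ s / Ts s)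
            * (δ * M s + ∑ a, (n s a : ℝ) * A s a) := by
          refine mul_le_mul_of_nonneg_left (Finset.sum_le_sum fun s _ => ?_) hco.le
          exact mul_le_mul_of_nonneg_left (hstate s)
            (div_nonneg (hΓ s).le (hTs s).le)
      _ = δ * Mtot / (1 - γ) + K0 :=
          final_alg Γ Ts M (fun s => ∑ a, (n s a : ℝ) * A s a) γ δ Γtot
            (ne_of_gt h1γ) (ne_of_gt hΓt)
  · intro δ hδ Δh hfeas
    have hmem : ∀ s, ∑ a, (n s a : ℝ) * (δ * Δh s a) = 0 := by
      intro s
      have e1 : ∀ a ∈ Finset.univ,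
          (n s a : ℝ) * (δ * Δh s a) = δ * ((n s a : ℝ) * Δh s a) := fun a _ => by ring
      rw [Finset.sum_congr rfl e1, ← Finset.mul_sum, (hfeas s).2.1, mul_zero]
    refine ⟨hmem, ?_⟩
    have hstate : ∀ s, (∑ a, (n s a : ℝ) *
        (clip (δ * Δh s a)
            (Ts s * (δ - Dhat s (fun s a => δ * Δh s a)) + |δ * Δh s a|) * A s a
          + (1 - Cs s (fun s a => δ * Δh s a) δ) * A s a))
        = δ * M s + ∑ a, (n s a : ℝ) * A s a := by
      intro s
      have h := state_eq (n s) (hn s) (A s) δ hδ (Δh s)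
        (Ts s) (Dhat s (fun s a => δ * Δh s a)) (Cs s (fun s a => δ * Δh s a) δ)
        (fun a => clip (δ * Δh s a)
          (Ts s * (δ - Dhat s (fun s a => δ * Δh s a)) + |δ * Δh s a|))
        rfl (hfeas s).1 (hfeas s).2.1 rfl (fun a => rfl) rfl
      rw [(hfeas s).2.2] at h
      exact h
    calc jAPC (fun s a => δ * Δh s a) δ
        = (1 / ((1 - γ) * Γtot)) * ∑ s, (Γ s / Ts s) * (∑ a, (n s a : ℝ) *
            (clip (δ * Δh s a)
                (Ts s * (δ - Dhat s (fun s a => δ * Δh s a)) + |δ * Δh s a|) * A s a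
              + (1 - Cs s (fun s a => δ * Δh s a) δ) * A s a)) := rfl
      _ = (1 / ((1 - γ) * Γtot)) * ∑ s, (Γ s / Ts s)
            * (δ * M s + ∑ a, (n s a : ℝ) * A s a) := by
          refine congrArg _ (Finset.sum_congr rfl fun s _ => ?_)
          rw [hstate s]
      _ = δ * Mtot / (1 - γ) + K0 :=
          final_alg Γ Ts M (fun s => ∑ a, (n s a : ℝ) * A s a) γ δ Γtot
            (ne_of_gt h1γ) (ne_of_gt hΓt)
end
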